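/- arXiv:1105.3713 — 10 statements merged into one kernel-verified Lean document; each statement's English description precedes it below -/
import Mathlib

section
/- The Motzkin numbers with weight ω=1 satisfy M_{n;1} = Σ_{k=0}^{n} C(n,k)·(−1)^{n−k}·C_{k+1}, where C_m denotes the m-th Catalan number. -/
open scoped BigOperators

/-- Weighted count of Motzkin-type paths from (0,0) to (n,j): steps (1,1),(1,-1),(1,0),
horizontal steps weighted ω, staying weakly above the x-axis. -/
def motzkinM (ω : ℚ) : ℕ → ℤ → ℚ
  | 0, j => if j = 0 then 1 else 0
  | n+1, j => if j < 0 then 0 else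
      motzkinM ω n (j-1) + ω * motzkinM ω n j + motzkinM ω n (j+1)


def chooseZ (m : ℕ) (a : ℤ) : ℚ := if a < 0 then 0 else m.choose a.toNat

def EE (m : ℕ) (h : ℤ) : ℚ :=
  if h < 0 ∨ ((m : ℤ) - h) % 2 ≠ 0 then 0
  else chooseZ m (((m : ℤ) - h) / 2) - chooseZ m (((m : ℤ) - h) / 2 - 1)

lemma chooseZ_pascal (m : ℕ) (a : ℤ) :
    chooseZ (m+1) a = chooseZ m a + chooseZ m (a-1) := by
  unfold chooseZ
  rcases lt_trichotomy a 0 with h | h | h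
  · rw [if_pos h, if_pos h, if_pos (by omega)]; ring
  · subst h; norm_num
  · rw [if_neg (by omega), if_neg (by omega), if_neg (by omega)]
    obtain ⟨t, rfl⟩ : ∃ t : ℕ, a = (t : ℤ) + 1 := ⟨(a-1).toNat, by omega⟩
    have h1 : ((t:ℤ)+1).toNat = t + 1 := by omega
    have h2 : ((t:ℤ)+1-1).toNat = t := by omega
    rw [h1, h2, Nat.choose_succ_succ]
    push_cast; ring

lemma chooseZ_symm_half (m : ℕ) (q : ℤ) (hq : 1 ≤ q) (hm : (m:ℤ) = 2*q - 1) :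
    chooseZ m q = chooseZ m (q-1) := by
  unfold chooseZ
  rw [if_neg (by omega), if_neg (by omega)]
  have h2 : m.choose q.toNat = m.choose (q-1).toNat := by
    have h := Nat.choose_symm (n := m) (k := q.toNat) (by omega)
    rw [show m - q.toNat = (q-1).toNat by omega] at h
    exact h.symm
  rw [h2]

lemma EE_neg (m : ℕ) (h : ℤ) (hh : h < 0) : EE m h = 0 := by
  unfold EE; rw [if_pos (Or.inl hh)]

lemma EE_rec (m : ℕ) (h : ℤ) (hh : 0 ≤ h) :
    EE (m+1) h = EE m (h-1) + EE m (h+1) := by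
  unfold EE
  split_ifs with c1 c2 c3 c2 c3 c3
  · norm_num
  · exfalso; omega
  · exfalso; omega
  · exfalso; omega
  · exfalso; omega
  · -- c1 false, c2 true (h = 0), c3 false
    have hz : h = 0 := by omega
    subst hz
    have hq : ∃ q : ℤ, (m:ℤ) + 1 = 2*q ∧ 1 ≤ q := ⟨((m:ℤ)+1)/2, by omega⟩
    obtain ⟨q, hq1, hq2⟩ := hq
    push_cast
    rw [show ((m:ℤ)+1-0)/2 = q by omega]
    rw [show ((m:ℤ)-1)/2 = q-1 by omega]
    rw [show m = 2*q.toNat - 1 by omega]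
    rw [chooseZ_pascal, chooseZ_pascal,
      chooseZ_symm_half (2*q.toNat-1) q hq2 (by omega)]
    ring
  · exfalso; omega
  · -- all false, generic case h ≥ 1
    have h1 : 1 ≤ h := by omega
    have hq : ∃ q : ℤ, (m:ℤ) + 1 - h = 2*q := ⟨((m:ℤ)+1-h)/2, by omega⟩
    obtain ⟨q, hq1⟩ := hq
    push_cast
    rw [show ((m:ℤ)+1-h)/2 = q by omega]
    rw [show ((m:ℤ)-(h-1))/2 = q by omega]
    rw [show ((m:ℤ)-(h+1))/2 = q-1 by omega]
    rw [chooseZ_pascal, chooseZ_pascal]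
    ring

def GG (k : ℕ) (j : ℤ) : ℚ := EE (2*k+1) (2*j+1)

lemma GG_neg (k : ℕ) (j : ℤ) (hj : j < 0) : GG k j = 0 := EE_neg _ _ (by omega)

lemma GG_rec (k : ℕ) (j : ℤ) (hj : 0 ≤ j) :
    GG (k+1) j = GG k (j-1) + GG k j + (GG k j + GG k (j+1)) := by
  have h1 : EE (2*(k+1)+1) (2*j+1) = EE (2*k+2) (2*j) + EE (2*k+2) (2*j+2) := by
    have h := EE_rec (2*k+2) (2*j+1) (by omega)
    rw [show 2*(k+1)+1 = 2*k+2+1 from by ring, h]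
    congr 1 <;> congr 1 <;> ring
  have h2 : EE (2*k+2) (2*j) = EE (2*k+1) (2*j-1) + EE (2*k+1) (2*j+1) := by
    have h := EE_rec (2*k+1) (2*j) (by omega)
    rw [show (2*k+2) = 2*k+1+1 from rfl, h]
  have h3 : EE (2*k+2) (2*j+2) = EE (2*k+1) (2*j+1) + EE (2*k+1) (2*j+3) := by
    have h := EE_rec (2*k+1) (2*j+2) (by omega)
    rw [show (2*k+2) = 2*k+1+1 from rfl, h]
    congr 1 <;> congr 1 <;> ring
  unfold GG
  rw [h1, h2, h3, show (2*j-1) = 2*(j-1)+1 by ring, show (2*j+3) = 2*(j+1)+1 by ring]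

lemma GG_init (j : ℤ) : GG 0 j = if j = 0 then 1 else 0 := by
  unfold GG EE chooseZ
  rcases lt_trichotomy j 0 with h | h | h
  · rw [if_pos (Or.inl (show 2*j+1 < 0 by omega)), if_neg (show ¬(j = 0) by omega)]
  · subst h; norm_num
  · rw [if_neg (show ¬(2*j+1 < 0 ∨ (((2*0+1 : ℕ) : ℤ) - (2*j+1)) % 2 ≠ 0) by omega)]
    rw [if_pos (show (((2*0+1 : ℕ) : ℤ) - (2*j+1))/2 < 0 by omega)]
    rw [if_pos (show (((2*0+1 : ℕ) : ℤ) - (2*j+1))/2 - 1 < 0 by omega)]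
    rw [if_neg (show ¬(j = 0) by omega)]
    norm_num

lemma GG_catalan (k : ℕ) : GG k 0 = (catalan (k+1) : ℚ) := by
  have hGG : GG k 0 = chooseZ (2*k+1) k - chooseZ (2*k+1) ((k:ℤ)-1) := by
    unfold GG EE
    rw [if_neg (show ¬((2*(0:ℤ)+1 < 0) ∨ (((2*k+1 : ℕ) : ℤ) - (2*0+1)) % 2 ≠ 0) by omega)]
    rw [show (((2*k+1 : ℕ) : ℤ) - (2*0+1))/2 = (k:ℤ) by omega]
  rcases Nat.eq_zero_or_pos k with hk | hk
  · subst hk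
    rw [hGG]
    unfold chooseZ
    norm_num [catalan_one]
  · -- k ≥ 1
    rw [hGG]
    unfold chooseZ
    rw [if_neg (by omega), if_neg (by omega)]
    rw [show ((k:ℤ)).toNat = k by omega, show ((k:ℤ)-1).toNat = k - 1 by omega]
    -- A - B = c with A*k = B*(k+2), (k+2)*c = 2*A
    have hAB : (2*k+1).choose k * k = (2*k+1).choose (k-1) * (k+2) := by
      have h := Nat.choose_succ_right_eq (2*k+1) (k-1)
      rw [show k - 1 + 1 = k by omega, show 2*k+1 - (k-1) = k+2 by omega] at h
      exact h
    have hc : (k+2) * catalan (k+1) = 2 * ((2*k+1).choose k) := by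
      have h := succ_mul_catalan_eq_centralBinom (k+1)
      rw [Nat.centralBinom_eq_two_mul_choose] at h
      have h2 : (2*(k+1)).choose (k+1) = 2 * ((2*k+1).choose k) := by
        rw [show 2*(k+1) = (2*k+1)+1 by ring, Nat.choose_succ_succ]
        have h3 : (2*k+1).choose (k+1) = (2*k+1).choose k := by
          rw [← Nat.choose_symm (show k+1 ≤ 2*k+1 by omega), show 2*k+1-(k+1) = k by omega]
        simp only [Nat.succ_eq_add_one]
        rw [h3]
        ring
      rw [h2] at h
      rw [show k+2 = k+1+1 from rfl]
      exact h
    have hABq : ((2*k+1).choose k : ℚ) * k = ((2*k+1).choose (k-1) : ℚ) * (k+2) := by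
      exact_mod_cast congrArg (fun x : ℕ => (x : ℚ)) hAB
    have hcq : ((k:ℚ)+2) * (catalan (k+1) : ℚ) = 2 * ((2*k+1).choose k : ℚ) := by
      exact_mod_cast congrArg (fun x : ℕ => (x : ℚ)) hc
    have hk2 : ((k:ℚ)+2) ≠ 0 := by positivity
    apply mul_left_cancel₀ hk2
    rw [mul_sub, hcq]
    nlinarith [hABq]

lemma motzkinM_neg (ω : ℚ) (n : ℕ) (j : ℤ) (hj : j < 0) : motzkinM ω n j = 0 := by
  cases n with
  | zero => simp only [motzkinM]; rw [if_neg (by omega)]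
  | succ n => simp only [motzkinM]; rw [if_pos hj]

lemma key' (n : ℕ) : ∀ j : ℤ, (-1:ℚ)^n * motzkinM 1 n j =
    ∑ k ∈ Finset.range (n+1), (n.choose k : ℚ) * (-1)^k * GG k j := by
  induction n with
  | zero =>
    intro j
    simp only [motzkinM, pow_zero, one_mul]
    rw [Finset.sum_range_one, GG_init j]
    norm_num
  | succ n ih =>
    intro j
    by_cases hj : j < 0
    · rw [motzkinM_neg 1 (n+1) j hj, mul_zero]
      symm
      apply Finset.sum_eq_zero
      intro k _
      rw [GG_neg k j hj, mul_zero]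
    · push_neg at hj
      have hrec : motzkinM 1 (n+1) j
          = motzkinM 1 n (j-1) + 1 * motzkinM 1 n j + motzkinM 1 n (j+1) := by
        simp only [motzkinM]
        rw [if_neg (by omega)]
      rw [hrec]
      have e1 : (-1:ℚ)^(n+1) * (motzkinM 1 n (j-1) + 1 * motzkinM 1 n j + motzkinM 1 n (j+1))
          = -(((-1:ℚ)^n * motzkinM 1 n (j-1)) + ((-1:ℚ)^n * motzkinM 1 n j)
              + ((-1:ℚ)^n * motzkinM 1 n (j+1))) := by ring
      rw [e1, ih (j-1), ih j, ih (j+1)]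
      rw [Finset.sum_range_succ' (fun k => ((n+1).choose k : ℚ) * (-1)^k * GG k j) (n+1)]
      have hsplit : ∑ k ∈ Finset.range (n+1), ((n+1).choose (k+1) : ℚ) * (-1)^(k+1) * GG (k+1) j
          = (∑ k ∈ Finset.range (n+1),
              (-(((n.choose k : ℚ)) * (-1)^k * GG k (j-1))
               + -(((n.choose k : ℚ)) * (-1)^k * GG k j)
               + (-(((n.choose k : ℚ)) * (-1)^k * GG k j)
                  + -(((n.choose k : ℚ)) * (-1)^k * GG k (j+1)))))
            + ∑ k ∈ Finset.range (n+1), ((n.choose (k+1) : ℚ)) * (-1)^(k+1) * GG (k+1) j := by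
        rw [← Finset.sum_add_distrib]
        apply Finset.sum_congr rfl
        intro k _
        have hgr := GG_rec k j hj
        rw [Nat.choose_succ_succ]
        push_cast
        rw [hgr]
        ring
      rw [hsplit]
      have hD : ∑ k ∈ Finset.range (n+1), ((n.choose (k+1) : ℚ)) * (-1)^(k+1) * GG (k+1) j
          = (∑ k ∈ Finset.range (n+1), (n.choose k : ℚ) * (-1)^k * GG k j) - GG 0 j := by
        have h1 := Finset.sum_range_succ' (fun k => (n.choose k : ℚ) * (-1)^k * GG k j) (n+1)
        have h2 := Finset.sum_range_succ (fun k => (n.choose k : ℚ) * (-1)^k * GG k j) (n+1)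
        simp only [Nat.choose_succ_self, Nat.cast_zero, Nat.choose_zero_right, Nat.cast_one,
          pow_zero, one_mul, zero_mul, mul_zero, add_zero] at h1 h2
        rw [h2] at h1
        linarith [h1]
      rw [hD]
      rw [Finset.sum_add_distrib, Finset.sum_add_distrib, Finset.sum_add_distrib]
      simp only [Finset.sum_neg_distrib]
      simp only [Nat.choose_zero_right, Nat.cast_one, pow_zero, one_mul]
      ring

theorem motzkin_eq_alternating_catalan (n : ℕ) :
    motzkinM 1 n 0 =
      ∑ k ∈ Finset.range (n+1), (n.choose k : ℚ) * (-1) ^ (n - k) * (catalan (k+1) : ℚ) := by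
  have h := key' n 0
  have hnn : ((-1:ℚ))^n * (-1)^n = 1 := by
    rw [← pow_add, ← two_mul, pow_mul]; norm_num
  have hsum : ∑ k ∈ Finset.range (n+1), (n.choose k : ℚ) * (-1) ^ (n-k) * (catalan (k+1) : ℚ)
      = (-1:ℚ)^n * ∑ k ∈ Finset.range (n+1), (n.choose k : ℚ) * (-1)^k * GG k 0 := by
    rw [Finset.mul_sum]
    apply Finset.sum_congr rfl
    intro k hk
    rw [Finset.mem_range] at hk
    have hkn : k ≤ n := by omega
    rw [GG_catalan k]
    have h2 : ((-1:ℚ))^k * (-1)^k = 1 := by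
      rw [← pow_add, ← two_mul, pow_mul]; norm_num
    have h3 : ((-1:ℚ))^(n-k) = (-1)^n * (-1)^k := by
      calc (-1:ℚ)^(n-k) = (-1)^(n-k) * ((-1)^k * (-1)^k) := by rw [h2, mul_one]
        _ = ((-1:ℚ)^(n-k) * (-1)^k) * (-1)^k := by ring
        _ = (-1:ℚ)^n * (-1)^k := by rw [← pow_add, Nat.sub_add_cancel hkn]
    rw [h3]
    ring
  rw [hsum, ← h, ← mul_assoc, hnn, one_mul]
end

section
/- The inverse Motzkin matrix entries are given by Gegenbauer polynomial values: m_{i,j} = [t^{i−j}] (1+ωt+t²)^{−j−1} = Σ_{l=0}^{⌊(i−j)/2⌋} C(i−l, i−j−l)·C(i−j−l, l)·(−1)^l·(−ω)^{i−j−2l}. -/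
open scoped BigOperators
open Finset PowerSeries

private lemma tele {R : Type*} [CommRing R] (u : R) (j n : ℕ) :
    (1 - u) * ∑ k ∈ range (n+1), ((j+1+k).choose (j+1) : R) * u^k =
      (∑ k ∈ range (n+1), ((j+k).choose j : R) * u^k)
        - ((j+1+n).choose (j+1) : R) * u^(n+1) := by
  induction n with
  | zero => simp
  | succ n ih =>
      rw [sum_range_succ, mul_add, ih]
      conv_rhs => rw [sum_range_succ]
      have hp : ((j+1+(n+1)).choose (j+1) : R)
          = ((j+(n+1)).choose j : R) + ((j+1+n).choose (j+1) : R) := by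
        have h1 : j+1+(n+1) = (j+n+1)+1 := by omega
        have h2 : j+(n+1) = j+n+1 := by omega
        have h3 : j+1+n = j+n+1 := by omega
        rw [h1, h2, h3, Nat.choose_succ_succ]
        push_cast; ring
      linear_combination (u^(n+1)) * hp

private lemma key {R : Type*} [CommRing R] (u : R) (n j : ℕ) :
    ∃ c : R, (1 - u)^(j+1) * ∑ k ∈ range (n+1), ((j+k).choose j : R) * u^k
      = 1 - u^(n+1) * c := by
  induction j with
  | zero =>
      exact ⟨1, by simp [mul_neg_geom_sum u (n+1)]⟩
  | succ j ih =>
      obtain ⟨c, hc⟩ := ih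
      refine ⟨c + ((j+1+n).choose (j+1) : R) * (1-u)^(j+1), ?_⟩
      have ht := tele u j n
      calc (1-u)^(j+1+1) * ∑ k ∈ range (n+1), ((j+1+k).choose (j+1) : R) * u^k
          = (1-u)^(j+1) * ((1-u) * ∑ k ∈ range (n+1), ((j+1+k).choose (j+1) : R) * u^k) := by ring
        _ = (1-u)^(j+1) * ((∑ k ∈ range (n+1), ((j+k).choose j : R) * u^k)
              - ((j+1+n).choose (j+1) : R) * u^(n+1)) := by rw [ht]
        _ = 1 - u^(n+1) * (c + ((j+1+n).choose (j+1) : R) * (1-u)^(j+1)) := by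
              rw [mul_sub, hc]; ring

private lemma aux1 (ω : ℚ) (i a k : ℕ) :
    PowerSeries.coeff (R := ℚ) i ((PowerSeries.X : PowerSeries ℚ)^a * (PowerSeries.C (R := ℚ) ω + PowerSeries.X)^k) =
      if i ≤ a + k then ((k.choose (a+k-i) : ℚ) * ω^(a+k-i)) else 0 := by
  rw [add_pow, Finset.mul_sum, map_sum]
  have hterm : ∀ m ∈ range (k+1),
      PowerSeries.coeff (R := ℚ) i ((X:PowerSeries ℚ)^a * (C (R := ℚ) ω ^ m * X^(k-m) * (k.choose m : PowerSeries ℚ)))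
        = if i = a + (k - m) then (k.choose m : ℚ) * ω^m else 0 := by
    intro m _
    have heq : (X:PowerSeries ℚ)^a * (C (R := ℚ) ω ^ m * X^(k-m) * (k.choose m : PowerSeries ℚ))
        = C (R := ℚ) ((k.choose m : ℚ) * ω^m) * X^(a + (k-m)) := by
      rw [← map_natCast (C (R := ℚ)) (k.choose m), ← map_pow, map_mul]
      ring
    rw [heq, coeff_C_mul_X_pow]
  rw [Finset.sum_congr rfl hterm]
  by_cases h : i ≤ a + k
  · by_cases ha : a ≤ i
    · rw [if_pos h]
      rw [Finset.sum_eq_single_of_mem (a+k-i) (by simp; omega)]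
      · rw [if_pos (by omega)]
      · intro m hm hne
        rw [if_neg]
        simp only [mem_range] at hm
        omega
    · rw [if_pos h, Finset.sum_eq_zero, Nat.choose_eq_zero_of_lt (by omega)]
      · simp
      · intro m hm
        rw [if_neg (by omega)]
  · rw [if_neg h, Finset.sum_eq_zero]
    intro m hm
    simp only [mem_range] at hm
    rw [if_neg (by omega)]

/-- Inverse Motzkin matrix entries: m i j is the coefficient of t^i in
t^j * (1 + ω t + t^2)⁻¹ ^ (j+1). -/
noncomputable def minv (ω : ℚ) (i j : ℕ) : ℚ :=
  PowerSeries.coeff (R := ℚ) i ((PowerSeries.X : PowerSeries ℚ) ^ j *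
    ((1 + PowerSeries.C (R := ℚ) ω * PowerSeries.X + PowerSeries.X ^ 2)⁻¹) ^ (j + 1))

theorem minv_gegenbauer (ω : ℚ) (i j : ℕ) (h : j ≤ i) :
    minv ω i j =
      ∑ l ∈ Finset.range ((i - j)/2 + 1),
        ((i - l).choose (i - j - l) : ℚ) * ((i - j - l).choose l : ℚ) *
          (-1) ^ l * (-ω) ^ (i - j - 2*l) := by
  set n := i - j with hn
  have hi : i = j + n := by omega
  set A : PowerSeries ℚ := 1 + PowerSeries.C (R := ℚ) ω * PowerSeries.X + PowerSeries.X ^ 2 with hA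
  set u : PowerSeries ℚ := -(PowerSeries.C (R := ℚ) ω * PowerSeries.X + PowerSeries.X ^ 2) with hu
  have h1u : (1 : PowerSeries ℚ) - u = A := by rw [hu, hA]; ring
  have hA0 : PowerSeries.constantCoeff (R := ℚ) A ≠ 0 := by
    rw [hA]
    simp
  have hmul : A⁻¹ * A = 1 := PowerSeries.inv_mul_cancel A hA0
  have hpow : (A⁻¹)^(j+1) * A^(j+1) = 1 := by rw [← mul_pow, hmul, one_pow]
  obtain ⟨c, hc⟩ := key u n j
  rw [h1u] at hc
  set T : PowerSeries ℚ := ∑ k ∈ range (n+1), ((j+k).choose j : PowerSeries ℚ) * u^k with hT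
  have hTeq : T = (A⁻¹)^(j+1) - (A⁻¹)^(j+1) * (u^(n+1) * c) := by
    have := congrArg (fun f => (A⁻¹)^(j+1) * f) hc
    change (A⁻¹)^(j+1) * (A^(j+1) * T) = (A⁻¹)^(j+1) * (1 - u^(n+1) * c) at this
    rw [← mul_assoc, hpow, one_mul] at this
    rw [this]; ring
  have hsplit : (PowerSeries.X : PowerSeries ℚ)^j * (A⁻¹)^(j+1)
      = PowerSeries.X^j * T + PowerSeries.X^(i+1) *
        ((-(PowerSeries.C (R := ℚ) ω + PowerSeries.X))^(n+1) * ((A⁻¹)^(j+1) * c)) := by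
    rw [hTeq]
    have hu' : u = PowerSeries.X * (-(PowerSeries.C (R := ℚ) ω + PowerSeries.X)) := by rw [hu]; ring
    have : u^(n+1) = PowerSeries.X^(n+1) * (-(PowerSeries.C (R := ℚ) ω + PowerSeries.X))^(n+1) := by
      rw [hu', mul_pow]
    rw [this, hi]
    ring
  rw [minv, ← hA, hsplit, map_add, PowerSeries.coeff_X_pow_mul' _ (i+1) i,
    if_neg (by omega), add_zero]
  -- now compute coeff i (X^j * T)
  rw [hT, Finset.mul_sum, map_sum]
  have hterm : ∀ k ∈ range (n+1),
      PowerSeries.coeff (R := ℚ) i ((PowerSeries.X : PowerSeries ℚ)^j *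
          (((j+k).choose j : PowerSeries ℚ) * u^k))
        = ((j+k).choose j : ℚ) * ((-1)^k *
            (if i ≤ j + k + k then ((k.choose (j+k+k-i) : ℚ) * ω^(j+k+k-i)) else 0)) := by
    intro k _
    have huk : (PowerSeries.X : PowerSeries ℚ)^j * (((j+k).choose j : PowerSeries ℚ) * u^k)
        = PowerSeries.C (R := ℚ) (((j+k).choose j : ℚ) * (-1)^k) *
          (PowerSeries.X^(j+k) * (PowerSeries.C (R := ℚ) ω + PowerSeries.X)^k) := by
      have hu' : u = PowerSeries.X * (-(PowerSeries.C (R := ℚ) ω + PowerSeries.X)) := by rw [hu]; ring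
      have hneg : (-(PowerSeries.C (R := ℚ) ω + PowerSeries.X))^k
          = PowerSeries.C (R := ℚ) ((-1:ℚ)^k) * (PowerSeries.C (R := ℚ) ω + PowerSeries.X)^k := by
        rw [neg_pow, map_pow, map_neg, map_one]
      rw [hu', mul_pow, hneg, map_mul, map_natCast]
      ring
    rw [huk, PowerSeries.coeff_C_mul, aux1 ω i (j+k) k]
    ring
  rw [Finset.sum_congr rfl hterm]
  -- reindex l = n - k
  rw [← Finset.sum_range_reflect]
  have hstep : ∀ l ∈ range (n+1),
      ((j+(n+1-1-l)).choose j : ℚ) * ((-1)^(n+1-1-l) *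
        (if i ≤ j + (n+1-1-l) + (n+1-1-l) then
          (((n+1-1-l).choose (j+(n+1-1-l)+(n+1-1-l)-i) : ℚ) * ω^(j+(n+1-1-l)+(n+1-1-l)-i)) else 0))
      = if l ∈ range (n/2+1) then
          ((i - l).choose (i - j - l) : ℚ) * ((i - j - l).choose l : ℚ) *
            (-1) ^ l * (-ω) ^ (i - j - 2*l)
        else 0 := by
    intro l hl
    simp only [mem_range] at hl
    have hln : l ≤ n := by omega
    simp only [show n+1-1-l = n-l from by omega]
    by_cases h2 : 2*l ≤ n
    · rw [if_pos (by omega), if_pos (mem_range.mpr (by omega))]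
      simp only [show j+(n-l)+(n-l)-i = n-2*l from by omega,
        show i-j-l = n-l from by omega, show i-l = j+(n-l) from by omega,
        show i-j-2*l = n-2*l from by omega]
      have c1 := Nat.choose_symm (show n-l ≤ j+(n-l) by omega)
      rw [show j+(n-l)-(n-l) = j from by omega] at c1
      have c2 := Nat.choose_symm (show l ≤ n-l by omega)
      rw [show n-l-l = n-2*l from by omega] at c2
      have c3 : (-ω)^(n-2*l) = (-1)^(n-2*l) * ω^(n-2*l) := neg_pow ω (n-2*l)
      have c4 : ((-1:ℚ))^l * (-1)^(n-2*l) = (-1)^(n-l) := by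
        rw [← pow_add, show l + (n-2*l) = n - l from by omega]
      rw [← c1, c2, c3]
      linear_combination (-((j+(n-l)).choose j : ℚ) * ((n-l).choose l : ℚ) * ω^(n-2*l)) * c4
    · rw [if_neg (by omega), if_neg (by simp only [mem_range]; omega)]
      ring
  rw [Finset.sum_congr rfl hstep, Finset.sum_ite_mem, Finset.inter_eq_right.mpr
    (by intro x hx; simp only [mem_range] at *; omega)]
end

section
/- The inverse Motzkin polynomial satisfies Σ_{j=0}^{k} m_{k,j} t^{k−j} = Σ_{l=0}^{⌊k/2⌋} C(k−l, l)·(−1)^l·t^{2l}·(1−ωt)^{k−2l}. -/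
open scoped BigOperators

namespace MinvAux

noncomputable def g (ω : ℚ) : PowerSeries ℚ :=
  1 + PowerSeries.C (R := ℚ) ω * PowerSeries.X + PowerSeries.X ^ 2

noncomputable def a (ω : ℚ) (m j : ℕ) : ℚ :=
  PowerSeries.coeff (R := ℚ) m ((g ω)⁻¹ ^ (j + 1))

lemma constCoeff_g (ω : ℚ) : PowerSeries.constantCoeff (R := ℚ) (g ω) = 1 := by
  simp [g]

lemma hg1 (ω : ℚ) : g ω * (g ω)⁻¹ = 1 := by
  apply PowerSeries.mul_inv_cancel
  rw [constCoeff_g]; norm_num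

lemma gpow (ω : ℚ) (j : ℕ) : g ω * (g ω)⁻¹ ^ (j + 2) = (g ω)⁻¹ ^ (j + 1) := by
  have : (g ω)⁻¹ ^ (j + 2) = (g ω)⁻¹ * (g ω)⁻¹ ^ (j + 1) := by ring
  rw [this, ← mul_assoc, hg1, one_mul]

lemma coeff_g_mul (ω : ℚ) (h : PowerSeries ℚ) (n : ℕ) :
    PowerSeries.coeff (R := ℚ) (n + 2) (g ω * h) =
      PowerSeries.coeff (R := ℚ) (n + 2) h + ω * PowerSeries.coeff (R := ℚ) (n + 1) h
        + PowerSeries.coeff (R := ℚ) n h := by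
  have h1 : (PowerSeries.C (R := ℚ) ω * PowerSeries.X) * h
      = PowerSeries.X ^ 1 * (PowerSeries.C (R := ℚ) ω * h) := by ring
  simp only [g, add_mul, one_mul, map_add, h1]
  rw [PowerSeries.coeff_X_pow_mul' (PowerSeries.C (R := ℚ) ω * h) 1 (n + 2),
    PowerSeries.coeff_X_pow_mul' h 2 (n + 2),
    if_pos (show (1:ℕ) ≤ n + 2 by omega), if_pos (show (2:ℕ) ≤ n + 2 by omega),
    show n + 2 - 1 = n + 1 by omega, show n + 2 - 2 = n by omega,
    PowerSeries.coeff_C_mul]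

lemma coeff_g_mul_one (ω : ℚ) (h : PowerSeries ℚ) :
    PowerSeries.coeff (R := ℚ) 1 (g ω * h) =
      PowerSeries.coeff (R := ℚ) 1 h + ω * PowerSeries.coeff (R := ℚ) 0 h := by
  have h1 : (PowerSeries.C (R := ℚ) ω * PowerSeries.X) * h
      = PowerSeries.X ^ 1 * (PowerSeries.C (R := ℚ) ω * h) := by ring
  simp only [g, add_mul, one_mul, map_add, h1]
  rw [PowerSeries.coeff_X_pow_mul' (PowerSeries.C (R := ℚ) ω * h) 1 1,
    PowerSeries.coeff_X_pow_mul' h 2 1,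
    if_pos (le_refl 1), if_neg (show ¬ (2:ℕ) ≤ 1 by omega),
    show (1:ℕ) - 1 = 0 from rfl, PowerSeries.coeff_C_mul]
  ring

lemma a_zero (ω : ℚ) (j : ℕ) : a ω 0 j = 1 := by
  simp [a, PowerSeries.coeff_zero_eq_constantCoeff, map_pow,
    PowerSeries.constantCoeff_inv, constCoeff_g]

lemma a_rec (ω : ℚ) (n j : ℕ) :
    a ω (n + 2) (j + 1) + ω * a ω (n + 1) (j + 1) + a ω n (j + 1) = a ω (n + 2) j := by
  have := coeff_g_mul ω ((g ω)⁻¹ ^ (j + 2)) n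
  rw [gpow] at this
  simpa [a] using this.symm

lemma a_rec0 (ω : ℚ) (n : ℕ) :
    a ω (n + 2) 0 + ω * a ω (n + 1) 0 + a ω n 0 = 0 := by
  have h := coeff_g_mul ω ((g ω)⁻¹) n
  rw [hg1] at h
  have h1 : PowerSeries.coeff (R := ℚ) (n + 2) (1 : PowerSeries ℚ) = 0 := by
    simp [PowerSeries.coeff_one]
  rw [h1] at h
  simp only [a, zero_add, pow_one]
  linarith

lemma a_rec1 (ω : ℚ) (j : ℕ) :
    a ω 1 (j + 1) + ω * a ω 0 (j + 1) = a ω 1 j := by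
  have := coeff_g_mul_one ω ((g ω)⁻¹ ^ (j + 2))
  rw [gpow] at this
  simpa [a, PowerSeries.coeff_zero_eq_constantCoeff] using this.symm

lemma a_one0 (ω : ℚ) : a ω 1 0 = -ω := by
  have h := coeff_g_mul_one ω ((g ω)⁻¹)
  rw [hg1] at h
  have h1 : PowerSeries.coeff (R := ℚ) 1 (1 : PowerSeries ℚ) = 0 := by
    simp [PowerSeries.coeff_one]
  have h0 : PowerSeries.coeff (R := ℚ) 0 ((g ω)⁻¹ : PowerSeries ℚ) = 1 := by
    have := a_zero ω 0
    simpa [a, zero_add, pow_one] using this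
  rw [h1, h0] at h
  simp only [a, zero_add, pow_one]
  linarith

noncomputable def P (ω : ℚ) (k : ℕ) : Polynomial ℚ :=
  ∑ m ∈ Finset.range (k + 1), Polynomial.C (a ω m (k - m)) * Polynomial.X ^ m

lemma coeff_P (ω : ℚ) (k m : ℕ) :
    (P ω k).coeff m = if m ≤ k then a ω m (k - m) else 0 := by
  rw [P, Polynomial.finset_sum_coeff]
  simp only [Polynomial.coeff_C_mul, Polynomial.coeff_X_pow, mul_ite, mul_one, mul_zero]
  rw [Finset.sum_ite_eq (Finset.range (k + 1)) m (fun i => a ω i (k - i))]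
  simp [Nat.lt_succ_iff]

lemma Prec (ω : ℚ) (k : ℕ) :
    P ω (k + 2) = (1 - Polynomial.C ω * Polynomial.X) * P ω (k + 1)
      - Polynomial.X ^ 2 * P ω k := by
  ext m
  have hX2 : ∀ (p : Polynomial ℚ) (d : ℕ), (Polynomial.X ^ 2 * p).coeff d
      = if 2 ≤ d then p.coeff (d - 2) else 0 := fun p d => Polynomial.coeff_X_pow_mul' p 2 d
  have hX1 : ∀ (p : Polynomial ℚ) (d : ℕ), (Polynomial.X * p).coeff d
      = if 1 ≤ d then p.coeff (d - 1) else 0 := by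
    intro p d
    rw [show (Polynomial.X : Polynomial ℚ) * p = Polynomial.X ^ 1 * p by ring]
    exact Polynomial.coeff_X_pow_mul' p 1 d
  have expand : (1 - Polynomial.C ω * Polynomial.X) * P ω (k + 1)
      = P ω (k + 1) - Polynomial.C ω * (Polynomial.X * P ω (k + 1)) := by ring
  rw [Polynomial.coeff_sub, expand, Polynomial.coeff_sub, Polynomial.coeff_C_mul,
    hX1, hX2]
  simp only [coeff_P]
  match m with
  | 0 =>
    rw [if_pos (Nat.zero_le _), if_pos (Nat.zero_le _),
      if_neg (show ¬ (1:ℕ) ≤ 0 by omega), if_neg (show ¬ (2:ℕ) ≤ 0 by omega),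
      Nat.sub_zero, Nat.sub_zero, a_zero, a_zero]
    ring
  | 1 =>
    rw [if_pos (show (1:ℕ) ≤ k + 2 by omega), if_pos (show (1:ℕ) ≤ k + 1 by omega),
      if_pos (show (1:ℕ) ≤ 1 by omega), if_pos (show (1:ℕ) - 1 ≤ k + 1 by omega),
      if_neg (show ¬ (2:ℕ) ≤ 1 by omega),
      show (1:ℕ) - 1 = 0 from rfl, Nat.sub_zero,
      show k + 2 - 1 = k + 1 by omega, show k + 1 - 1 = k by omega]
    linarith [a_rec1 ω k]
  | (n + 2) =>
    rw [if_pos (show (1:ℕ) ≤ n + 2 by omega), if_pos (show (2:ℕ) ≤ n + 2 by omega),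
      show n + 2 - 1 = n + 1 by omega, show n + 2 - 2 = n by omega]
    by_cases h1 : n + 2 ≤ k + 1
    · rw [if_pos (show n + 2 ≤ k + 2 by omega), if_pos h1,
        if_pos (show n + 1 ≤ k + 1 by omega), if_pos (show n ≤ k by omega)]
      obtain ⟨j, hj⟩ : ∃ j, k - n = j + 1 := ⟨k - n - 1, by omega⟩
      rw [show k + 2 - (n + 2) = j + 1 by omega, show k + 1 - (n + 2) = j by omega,
        show k + 1 - (n + 1) = j + 1 by omega, hj]
      linarith [a_rec ω n j]
    · by_cases h2 : n + 2 ≤ k + 2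
      · have hn : n = k := by omega
        subst hn
        rw [if_pos h2, if_neg h1, if_pos (le_refl (n + 1)), if_pos (le_refl n),
          show n + 2 - (n + 2) = 0 by omega, show n + 1 - (n + 1) = 0 by omega,
          show n - n = 0 by omega]
        linarith [a_rec0 ω n]
      · rw [if_neg h2, if_neg h1, if_neg (show ¬ n + 1 ≤ k + 1 by omega),
          if_neg (show ¬ n ≤ k by omega)]
        ring

noncomputable def T (ω : ℚ) (k l : ℕ) : Polynomial ℚ :=
  Polynomial.C (((k - l).choose l : ℚ) * (-1) ^ l) * Polynomial.X ^ (2 * l) *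
    (1 - Polynomial.C ω * Polynomial.X) ^ (k - 2 * l)

noncomputable def Q (ω : ℚ) (k : ℕ) : Polynomial ℚ :=
  ∑ l ∈ Finset.range (k + 1), T ω k l

lemma T_eq_zero (ω : ℚ) {k l : ℕ} (h : k < 2 * l) : T ω k l = 0 := by
  have hc : (k - l).choose l = 0 := Nat.choose_eq_zero_of_lt (by omega)
  simp [T, hc]

lemma key (ω : ℚ) (k l : ℕ) :
    T ω (k + 2) (l + 1) = (1 - Polynomial.C ω * Polynomial.X) * T ω (k + 1) (l + 1)
      - Polynomial.X ^ 2 * T ω k l := by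
  by_cases h : 2 * (l + 1) ≤ k + 2
  · by_cases h0 : 2 * (l + 1) = k + 2
    · have hk : k = 2 * l := by omega
      subst hk
      rw [T_eq_zero ω (k := 2*l+1) (l := l+1) (by omega)]
      simp only [T, show 2*l + 2 - (l+1) = l + 1 by omega, Nat.choose_self,
        show 2*l - l = l by omega, show 2*l + 2 - 2*(l+1) = 0 by omega,
        show 2*l - 2*l = 0 by omega, pow_zero, mul_one, Nat.cast_one, one_mul,
        map_mul, map_pow, map_neg, map_one]
      rw [show 2 * (l + 1) = 2 * l + 2 by ring, pow_add]
      ring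
    · obtain ⟨e, he⟩ : ∃ e, k - 2 * l = e + 1 := ⟨k - 2 * l - 1, by omega⟩
      have pascal : ((k + 2) - (l + 1)).choose (l + 1)
          = (k - l).choose l + (k - l).choose (l + 1) := by
        rw [show (k + 2) - (l + 1) = (k - l) + 1 by omega]
        exact Nat.choose_succ_succ (k - l) l
      simp only [T, pascal, show (k + 1) - (l + 1) = k - l by omega,
        show (k + 2) - 2 * (l + 1) = e + 1 by omega,
        show (k + 1) - 2 * (l + 1) = e by omega, he]
      rw [show 2 * (l + 1) = 2 * l + 2 by ring,
        pow_add Polynomial.X (2*l) 2,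
        pow_succ (1 - Polynomial.C ω * Polynomial.X) e]
      push_cast
      simp only [map_mul, map_add, map_sub, map_pow, map_neg, map_one, map_natCast]
      ring
  · rw [T_eq_zero ω (k := k + 2) (l := l + 1) (by omega),
      T_eq_zero ω (k := k + 1) (l := l + 1) (by omega),
      T_eq_zero ω (k := k) (l := l) (by omega)]
    ring

lemma Qrec (ω : ℚ) (k : ℕ) :
    Q ω (k + 2) = (1 - Polynomial.C ω * Polynomial.X) * Q ω (k + 1)
      - Polynomial.X ^ 2 * Q ω k := by
  have base : T ω (k + 2) 0 = (1 - Polynomial.C ω * Polynomial.X) * T ω (k + 1) 0 := by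
    simp only [T, Nat.choose_zero_right, Nat.sub_zero, Nat.cast_one, pow_zero, mul_one,
      Nat.mul_zero, one_mul]
    rw [pow_succ]
    ring
  have htop : T ω (k + 1) (k + 1 + 1) = 0 := T_eq_zero ω (by omega)
  have htop2 : T ω k (k + 1) = 0 := T_eq_zero ω (by omega)
  have e1 : Q ω (k + 2) = ∑ l ∈ Finset.range (k + 2), T ω (k + 2) (l + 1)
      + T ω (k + 2) 0 := Finset.sum_range_succ' _ _
  have e2 : ∑ l ∈ Finset.range (k + 2), T ω (k + 1) (l + 1) + T ω (k + 1) 0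
      = Q ω (k + 1) := by
    rw [show k + 2 = k + 1 + 1 from rfl, Finset.sum_range_succ, htop, add_zero, Q,
      Finset.sum_range_succ' (fun l => T ω (k + 1) l) (k + 1)]
  have e3 : ∑ l ∈ Finset.range (k + 2), T ω k l = Q ω k := by
    rw [show k + 2 = k + 1 + 1 from rfl, Finset.sum_range_succ, htop2, add_zero, Q]
  rw [e1]
  calc ∑ l ∈ Finset.range (k + 2), T ω (k + 2) (l + 1) + T ω (k + 2) 0
      = ∑ l ∈ Finset.range (k + 2), ((1 - Polynomial.C ω * Polynomial.X) * T ω (k + 1) (l + 1)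
          - Polynomial.X ^ 2 * T ω k l) + (1 - Polynomial.C ω * Polynomial.X) * T ω (k + 1) 0 := by
        rw [base]; congr 1; exact Finset.sum_congr rfl fun l _ => key ω k l
    _ = _ := by
        rw [Finset.sum_sub_distrib, ← Finset.mul_sum, ← Finset.mul_sum, e3, ← e2]
        ring

lemma PQ (ω : ℚ) : ∀ k, P ω k = Q ω k := by
  intro k
  induction k using Nat.strong_induction_on with
  | _ k ih =>
    match k, ih with
    | 0, _ =>
      show P ω 0 = Q ω 0
      simp [P, Q, T, a_zero]
    | 1, _ =>
      show P ω 1 = Q ω 1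
      rw [P, Q]
      simp only [Finset.sum_range_succ, Finset.sum_range_zero, zero_add]
      rw [T_eq_zero ω (k := 1) (l := 1) (by omega)]
      simp only [T, a_zero, a_one0, Nat.choose_zero_right, Nat.sub_zero, Nat.cast_one,
        pow_zero, mul_one, Nat.mul_zero, one_mul, pow_one]
      rw [a_one0]
      simp only [map_neg, Polynomial.C_1]
      ring
    | (n + 2), ih =>
      show P ω (n + 2) = Q ω (n + 2)
      rw [Prec, Qrec, ih n (by omega), ih (n + 1) (by omega)]

lemma minv_eq (ω : ℚ) {k j : ℕ} (h : j ≤ k) : minv ω k j = a ω (k - j) j := by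
  unfold minv a g
  rw [PowerSeries.coeff_X_pow_mul', if_pos h]

end MinvAux

theorem minv_polynomial (ω : ℚ) (k : ℕ) :
    ∑ j ∈ Finset.range (k+1), Polynomial.C (minv ω k j) * Polynomial.X ^ (k - j) =
      ∑ l ∈ Finset.range (k/2 + 1),
        Polynomial.C (((k - l).choose l : ℚ) * (-1) ^ l) * Polynomial.X ^ (2*l) *
          (1 - Polynomial.C ω * Polynomial.X) ^ (k - 2*l) := by
  have lhs : ∑ j ∈ Finset.range (k+1), Polynomial.C (minv ω k j) * Polynomial.X ^ (k - j)
      = MinvAux.P ω k := by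
    rw [← Finset.sum_range_reflect (fun j => Polynomial.C (minv ω k j) * Polynomial.X ^ (k - j))
      (k + 1)]
    rw [MinvAux.P]
    refine Finset.sum_congr rfl fun j hj => ?_
    rw [Finset.mem_range, Nat.lt_succ_iff] at hj
    rw [show k + 1 - 1 - j = k - j by omega,
      MinvAux.minv_eq ω (show k - j ≤ k by omega),
      show k - (k - j) = j by omega]
  have rhs : ∑ l ∈ Finset.range (k/2 + 1),
      Polynomial.C (((k - l).choose l : ℚ) * (-1) ^ l) * Polynomial.X ^ (2*l) *
        (1 - Polynomial.C ω * Polynomial.X) ^ (k - 2*l) = MinvAux.Q ω k := by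
    rw [MinvAux.Q]
    apply Finset.sum_subset
    · intro x hx
      rw [Finset.mem_range] at *
      omega
    · intro x hx hnx
      rw [Finset.mem_range] at *
      exact MinvAux.T_eq_zero ω (by omega)
  rw [lhs, rhs, MinvAux.PQ]
end

section
/- For all nonnegative integers i and j, M(i,j;ω) = Σ_{k=0}^{j} m_{j,k}·M_{i+k;ω}. -/
open scoped BigOperators

namespace Aux
noncomputable def Q (ω : ℚ) : PowerSeries ℚ := 1 + PowerSeries.C (R := ℚ) ω * PowerSeries.X + PowerSeries.X ^ 2
lemma constQ (ω : ℚ) : PowerSeries.constantCoeff (R := ℚ) (Q ω) = 1 := by simp [Q]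
lemma QinvQ (ω : ℚ) : Q ω * (Q ω)⁻¹ = 1 :=
  PowerSeries.mul_inv_cancel _ (by simp [constQ])
lemma minv_def (ω : ℚ) (i j : ℕ) :
    minv ω i j = PowerSeries.coeff (R := ℚ) i ((PowerSeries.X : PowerSeries ℚ) ^ j * ((Q ω)⁻¹) ^ (j+1)) := rfl
lemma coeff_Q_mul (ω : ℚ) (f : PowerSeries ℚ) (n : ℕ) :
    PowerSeries.coeff (R := ℚ) (n+2) (Q ω * f) =
      PowerSeries.coeff (R := ℚ) (n+2) f + ω * PowerSeries.coeff (R := ℚ) (n+1) f + PowerSeries.coeff (R := ℚ) n f := by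
  have h : Q ω * f = f + PowerSeries.C (R := ℚ) ω * (PowerSeries.X * f) + PowerSeries.X ^ 2 * f := by
    rw [Q]; ring
  rw [h]
  simp only [map_add, PowerSeries.coeff_C_mul]
  rw [show n+2 = (n+1)+1 from rfl, PowerSeries.coeff_succ_X_mul]
  rw [show (n+1)+1 = n+2 from rfl, PowerSeries.coeff_X_pow_mul]
lemma coeff_Q_mul_one (ω : ℚ) (f : PowerSeries ℚ) :
    PowerSeries.coeff (R := ℚ) 1 (Q ω * f) =
      PowerSeries.coeff (R := ℚ) 1 f + ω * PowerSeries.coeff (R := ℚ) 0 f := by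
  have h : Q ω * f = f + PowerSeries.C (R := ℚ) ω * (PowerSeries.X * f) + PowerSeries.X ^ 2 * f := by
    rw [Q]; ring
  rw [h]
  simp only [map_add, PowerSeries.coeff_C_mul]
  rw [show (1:ℕ) = 0+1 from rfl, PowerSeries.coeff_succ_X_mul]
  rw [PowerSeries.coeff_X_pow_mul' f 2 1, if_neg (by norm_num)]
  ring
lemma minv_zero (ω : ℚ) (i k : ℕ) (h : i < k) : minv ω i k = 0 := by
  rw [minv_def, PowerSeries.coeff_X_pow_mul', if_neg (not_le.2 h)]

-- F2
lemma minv_rec (ω : ℚ) (n k : ℕ) :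
    minv ω (n+2) (k+1) + ω * minv ω (n+1) (k+1) + minv ω n (k+1) = minv ω (n+1) k := by
  have key : Q ω * ((PowerSeries.X : PowerSeries ℚ) ^ (k+1) * ((Q ω)⁻¹) ^ (k+2)) =
      PowerSeries.X * ((PowerSeries.X : PowerSeries ℚ) ^ k * ((Q ω)⁻¹) ^ (k+1)) := by
    have h1 : Q ω * ((PowerSeries.X : PowerSeries ℚ) ^ (k+1) * ((Q ω)⁻¹) ^ (k+2)) =
        (Q ω * (Q ω)⁻¹) * ((PowerSeries.X : PowerSeries ℚ) ^ (k+1) * ((Q ω)⁻¹) ^ (k+1)) := by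
      rw [pow_succ ((Q ω)⁻¹) (k+1)]; ring
    rw [h1, QinvQ, one_mul, pow_succ (PowerSeries.X : PowerSeries ℚ) k]; ring
  have h2 := congrArg (PowerSeries.coeff (R := ℚ) (n+2)) key
  rw [coeff_Q_mul] at h2
  rw [show n+2 = (n+1)+1 from rfl, PowerSeries.coeff_succ_X_mul] at h2
  simpa [minv_def] using h2

-- F3
lemma minv_rec0 (ω : ℚ) (n : ℕ) :
    minv ω (n+2) 0 + ω * minv ω (n+1) 0 + minv ω n 0 = 0 := by
  have h2 := congrArg (PowerSeries.coeff (R := ℚ) (n+2)) (QinvQ ω)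
  rw [coeff_Q_mul] at h2
  simp only [PowerSeries.coeff_one] at h2
  rw [if_neg (by omega)] at h2
  simpa [minv_def] using h2

lemma minv00 (ω : ℚ) : minv ω 0 0 = 1 := by
  rw [minv_def]
  simp [PowerSeries.coeff_zero_eq_constantCoeff, constQ, PowerSeries.constantCoeff_inv]

lemma minv10 (ω : ℚ) : minv ω 1 0 = -ω := by
  have h2 := congrArg (PowerSeries.coeff (R := ℚ) 1) (QinvQ ω)
  rw [coeff_Q_mul_one] at h2
  simp only [PowerSeries.coeff_one, if_neg (by norm_num : ¬ (1:ℕ) = 0)] at h2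
  have h3 : PowerSeries.coeff (R := ℚ) 0 ((Q ω)⁻¹) = 1 := by
    simp [PowerSeries.coeff_zero_eq_constantCoeff, constQ, PowerSeries.constantCoeff_inv]
  rw [h3] at h2
  have : minv ω 1 0 = PowerSeries.coeff (R := ℚ) 1 ((Q ω)⁻¹) := by simp [minv_def]
  rw [this]; linarith

lemma minv11 (ω : ℚ) : minv ω 1 1 = 1 := by
  rw [minv_def]
  rw [pow_one, show (1:ℕ) = 0+1 from rfl, PowerSeries.coeff_succ_X_mul]
  rw [PowerSeries.coeff_zero_eq_constantCoeff, map_pow, PowerSeries.constantCoeff_inv, constQ]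
  norm_num

lemma mz_neg (ω : ℚ) : ∀ (i : ℕ) (j : ℤ), j < 0 → motzkinM ω i j = 0 := by
  intro i
  induction i with
  | zero => intro j h; simp [motzkinM, h.ne]
  | succ n ih => intro j h; simp [motzkinM, h]

lemma mz_succ (ω : ℚ) (i : ℕ) (j : ℤ) (h : 0 ≤ j) :
    motzkinM ω (i+1) j = motzkinM ω i (j-1) + ω * motzkinM ω i j + motzkinM ω i (j+1) := by
  rw [motzkinM, if_neg (not_lt.2 h)]

lemma mz_zero_succ (ω : ℚ) (i : ℕ) :
    motzkinM ω (i+1) 0 = ω * motzkinM ω i 0 + motzkinM ω i 1 := by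
  rw [mz_succ ω i 0 le_rfl, mz_neg ω i (0-1) (by norm_num)]
  norm_num

end Aux

theorem aux_main (ω : ℚ) : ∀ (j i : ℕ), motzkinM ω i (j : ℤ) =
    ∑ k ∈ Finset.range (j+1), minv ω j k * motzkinM ω (i+k) 0 := by
  intro j
  induction j using Nat.strong_induction_on with
  | _ j ih =>
    match j, ih with
    | 0, _ =>
      intro i
      simp [Finset.sum_range_one, Aux.minv00]
    | 1, _ =>
      intro i
      rw [Finset.sum_range_succ, Finset.sum_range_one, Aux.minv10, Aux.minv11,
        Aux.mz_zero_succ]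
      push_cast
      ring
    | (n+2), ih =>
      intro i
      have IH1 : ∀ i', (∑ k ∈ Finset.range (n+2), minv ω (n+1) k * motzkinM ω (i'+k) 0)
          = motzkinM ω i' ((n+1 : ℕ) : ℤ) := fun i' => (ih (n+1) (by omega) i').symm
      have IH0 : ∀ i', (∑ k ∈ Finset.range (n+1), minv ω n k * motzkinM ω (i'+k) 0)
          = motzkinM ω i' ((n : ℕ) : ℤ) := fun i' => (ih n (by omega) i').symm
      have split : ∑ k ∈ Finset.range (n+2), minv ω (n+2) (k+1) * motzkinM ω (i+(k+1)) 0
          = (∑ k ∈ Finset.range (n+2), minv ω (n+1) k * motzkinM ω ((i+1)+k) 0)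
            - ω * (∑ k ∈ Finset.range (n+2), minv ω (n+1) (k+1) * motzkinM ω (i+(k+1)) 0)
            - (∑ k ∈ Finset.range (n+2), minv ω n (k+1) * motzkinM ω (i+(k+1)) 0) := by
        rw [Finset.mul_sum, ← Finset.sum_sub_distrib, ← Finset.sum_sub_distrib]
        apply Finset.sum_congr rfl
        intro k _
        have h := Aux.minv_rec ω n k
        rw [show i + (k+1) = (i+1)+k from by omega]
        linear_combination motzkinM ω ((i+1)+k) 0 * h
      have hB : ∑ k ∈ Finset.range (n+2), minv ω (n+1) (k+1) * motzkinM ω (i+(k+1)) 0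
          = motzkinM ω i ((n+1 : ℕ) : ℤ) - minv ω (n+1) 0 * motzkinM ω i 0 := by
        have h : (∑ k ∈ Finset.range (n+3), minv ω (n+1) k * motzkinM ω (i+k) 0)
            = (∑ k ∈ Finset.range (n+2), minv ω (n+1) (k+1) * motzkinM ω (i+(k+1)) 0)
              + minv ω (n+1) 0 * motzkinM ω (i+0) 0 := Finset.sum_range_succ' _ (n+2)
        have h2 : (∑ k ∈ Finset.range (n+3), minv ω (n+1) k * motzkinM ω (i+k) 0)
            = (∑ k ∈ Finset.range (n+2), minv ω (n+1) k * motzkinM ω (i+k) 0)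
              + minv ω (n+1) (n+2) * motzkinM ω (i+(n+2)) 0 := Finset.sum_range_succ _ (n+2)
        rw [IH1 i, Aux.minv_zero ω (n+1) (n+2) (by omega)] at h2
        simp only [Nat.add_zero] at h
        rw [h2] at h
        linarith
      have hC : ∑ k ∈ Finset.range (n+2), minv ω n (k+1) * motzkinM ω (i+(k+1)) 0
          = motzkinM ω i ((n : ℕ) : ℤ) - minv ω n 0 * motzkinM ω i 0 := by
        have h : (∑ k ∈ Finset.range (n+3), minv ω n k * motzkinM ω (i+k) 0)
            = (∑ k ∈ Finset.range (n+2), minv ω n (k+1) * motzkinM ω (i+(k+1)) 0)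
              + minv ω n 0 * motzkinM ω (i+0) 0 := Finset.sum_range_succ' _ (n+2)
        have h2 : (∑ k ∈ Finset.range (n+3), minv ω n k * motzkinM ω (i+k) 0)
            = (∑ k ∈ Finset.range (n+2), minv ω n k * motzkinM ω (i+k) 0)
              + minv ω n (n+2) * motzkinM ω (i+(n+2)) 0 := Finset.sum_range_succ _ (n+2)
        have h3 : (∑ k ∈ Finset.range (n+2), minv ω n k * motzkinM ω (i+k) 0)
            = (∑ k ∈ Finset.range (n+1), minv ω n k * motzkinM ω (i+k) 0)
              + minv ω n (n+1) * motzkinM ω (i+(n+1)) 0 := Finset.sum_range_succ _ (n+1)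
        rw [IH0 i, Aux.minv_zero ω n (n+1) (by omega)] at h3
        rw [h3, Aux.minv_zero ω n (n+2) (by omega)] at h2
        simp only [Nat.add_zero] at h
        rw [h2] at h
        linarith
      have hA : ∑ k ∈ Finset.range (n+2), minv ω (n+1) k * motzkinM ω ((i+1)+k) 0
          = motzkinM ω (i+1) ((n+1 : ℕ) : ℤ) := IH1 (i+1)
      have hstep : motzkinM ω (i+1) ((n+1 : ℕ) : ℤ)
          = motzkinM ω i ((n : ℕ) : ℤ) + ω * motzkinM ω i ((n+1 : ℕ) : ℤ)
            + motzkinM ω i ((n+2 : ℕ) : ℤ) := by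
        rw [Aux.mz_succ ω i ((n+1 : ℕ) : ℤ) (by exact_mod_cast Nat.zero_le (n+1)),
          show ((n+1 : ℕ) : ℤ) - 1 = ((n : ℕ) : ℤ) from by push_cast; ring,
          show ((n+1 : ℕ) : ℤ) + 1 = ((n+2 : ℕ) : ℤ) from by push_cast; ring]
      have h0 := Aux.minv_rec0 ω n
      rw [show n+2+1 = n+3 from rfl, Finset.sum_range_succ' _ (n+2), split, hB, hC, hA, hstep]
      simp only [Nat.add_zero]
      linear_combination (-(motzkinM ω i 0)) * h0

theorem motzkin_from_inverse (ω : ℚ) (i j : ℕ) :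
    motzkinM ω i j = ∑ k ∈ Finset.range (j+1), minv ω j k * motzkinM ω (i+k) 0 := by
  exact aux_main ω j i
end

section
/- For 0 ≤ i ≤ j, Σ_{k=0}^{j} m_{j,k}·M_{i+k;ω} = δ_{i,j}. In particular this orthogonality involves Motzkin numbers with indices exceeding j. -/
open scoped BigOperators

open PowerSeries


noncomputable def qs (ω : ℚ) : PowerSeries ℚ :=
  1 + PowerSeries.C (R := ℚ) ω * PowerSeries.X + PowerSeries.X ^ 2

lemma constantCoeff_qs (ω : ℚ) : PowerSeries.constantCoeff (R := ℚ) (qs ω) = 1 := by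
  simp [qs]

lemma qs_inv_mul (ω : ℚ) : (qs ω)⁻¹ * qs ω = 1 :=
  PowerSeries.inv_mul_cancel _ (by simp [constantCoeff_qs])

lemma coeff_mul_qs (ω : ℚ) (f : PowerSeries ℚ) (n : ℕ) :
    PowerSeries.coeff (R := ℚ) (n+2) (f * qs ω) =
      PowerSeries.coeff (R := ℚ) (n+2) f + ω * PowerSeries.coeff (R := ℚ) (n+1) f
        + PowerSeries.coeff (R := ℚ) n f := by
  have h1 : f * qs ω = f + (f * PowerSeries.C (R := ℚ) ω) * PowerSeries.X + f * PowerSeries.X ^ 2 := by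
    simp only [qs]; ring
  rw [h1, map_add, map_add, PowerSeries.coeff_succ_mul_X, PowerSeries.coeff_mul_C,
    PowerSeries.coeff_mul_X_pow]
  ring

lemma coeff_one_mul_qs (ω : ℚ) (f : PowerSeries ℚ) :
    PowerSeries.coeff (R := ℚ) 1 (f * qs ω) =
      PowerSeries.coeff (R := ℚ) 1 f + ω * PowerSeries.coeff (R := ℚ) 0 f := by
  have h1 : f * qs ω = f + (f * PowerSeries.C (R := ℚ) ω) * PowerSeries.X + f * PowerSeries.X ^ 2 := by
    simp only [qs]; ring
  rw [h1]
  have : PowerSeries.coeff (R := ℚ) 1 (f * PowerSeries.X ^ 2) = 0 := by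
    rw [PowerSeries.coeff_mul_X_pow']
    simp
  simp [this, PowerSeries.coeff_succ_mul_X, PowerSeries.coeff_mul_C, mul_comm]


lemma minv_eq (ω : ℚ) (i j : ℕ) :
    minv ω i j = PowerSeries.coeff (R := ℚ) i
      ((PowerSeries.X : PowerSeries ℚ) ^ j * ((qs ω)⁻¹) ^ (j + 1)) := rfl

lemma minv_zero_of_lt (ω : ℚ) {i j : ℕ} (h : i < j) : minv ω i j = 0 := by
  rw [minv_eq, PowerSeries.coeff_X_pow_mul', if_neg (by omega)]

lemma constantCoeff_qs_inv (ω : ℚ) :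
    PowerSeries.constantCoeff (R := ℚ) ((qs ω)⁻¹) = 1 := by
  rw [PowerSeries.constantCoeff_inv, constantCoeff_qs, inv_one]

lemma minv_diag (ω : ℚ) (j : ℕ) : minv ω j j = 1 := by
  rw [minv_eq]
  rw [PowerSeries.coeff_X_pow_mul', if_pos le_rfl, Nat.sub_self]
  rw [PowerSeries.coeff_zero_eq_constantCoeff, map_pow, constantCoeff_qs_inv, one_pow]

lemma minv_one_zero (ω : ℚ) : minv ω 1 0 = -ω := by
  have h : PowerSeries.coeff (R := ℚ) 1 ((qs ω)⁻¹ * qs ω) = 0 := by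
    rw [qs_inv_mul]; simp
  rw [coeff_one_mul_qs] at h
  have h0 : PowerSeries.coeff (R := ℚ) 0 ((qs ω)⁻¹) = 1 := by
    rw [PowerSeries.coeff_zero_eq_constantCoeff]; exact constantCoeff_qs_inv ω
  rw [h0, mul_one] at h
  rw [minv_eq]
  simp only [pow_zero, one_mul, zero_add, pow_one]
  linarith

lemma minv_rec0 (ω : ℚ) (j : ℕ) :
    minv ω (j+2) 0 = -ω * minv ω (j+1) 0 - minv ω j 0 := by
  have h : PowerSeries.coeff (R := ℚ) (j+2) ((qs ω)⁻¹ * qs ω) = 0 := by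
    rw [qs_inv_mul]; simp
  rw [coeff_mul_qs] at h
  simp only [minv_eq, pow_zero, one_mul, zero_add, pow_one]
  linarith

lemma minv_rec (ω : ℚ) (j k : ℕ) :
    minv ω (j+2) (k+1) = minv ω (j+1) k - ω * minv ω (j+1) (k+1) - minv ω j (k+1) := by
  set X : PowerSeries ℚ := PowerSeries.X
  set r : PowerSeries ℚ := (qs ω)⁻¹
  have key : (X ^ (k+1) * r ^ (k+2)) * qs ω = X * (X ^ k * r ^ (k+1)) := by
    have h := qs_inv_mul ω
    calc (X ^ (k+1) * r ^ (k+2)) * qs ω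
        = X * (X ^ k * r ^ (k+1)) * (r * qs ω) := by ring
      _ = X * (X ^ k * r ^ (k+1)) := by rw [h, mul_one]
  have h2 : PowerSeries.coeff (R := ℚ) (j+2) ((X ^ (k+1) * r ^ (k+2)) * qs ω)
      = PowerSeries.coeff (R := ℚ) (j+1) (X ^ k * r ^ (k+1)) := by
    rw [key, mul_comm, PowerSeries.coeff_succ_mul_X]
  rw [coeff_mul_qs] at h2
  simp only [minv_eq]
  have e1 : k + 1 + 1 = k + 2 := rfl
  rw [e1]
  linarith


lemma motzkinM_neg_s11 (ω : ℚ) : ∀ (n : ℕ) (l : ℤ), l < 0 → motzkinM ω n l = 0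
  | 0, l, h => by simp [motzkinM]; omega
  | n+1, l, h => by simp [motzkinM, h]

lemma motzkinM_gt (ω : ℚ) : ∀ (n : ℕ) (l : ℤ), (n : ℤ) < l → motzkinM ω n l = 0
  | 0, l, h => by simp [motzkinM]; omega
  | n+1, l, h => by
    have h1 : ¬ l < 0 := by omega
    simp only [motzkinM, h1, if_false]
    rw [motzkinM_gt ω n (l-1) (by push_cast; omega),
      motzkinM_gt ω n l (by push_cast; omega),
      motzkinM_gt ω n (l+1) (by push_cast; omega)]
    ring

lemma motzkinM_diag (ω : ℚ) : ∀ (n : ℕ), motzkinM ω n n = 1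
  | 0 => by simp [motzkinM]
  | n+1 => by
    have h1 : ¬ ((n:ℤ)+1) < 0 := by omega
    simp only [motzkinM]
    push_cast
    rw [if_neg h1]
    rw [show (n:ℤ) + 1 - 1 = n by ring]
    rw [motzkinM_diag ω n, motzkinM_gt ω n ((n:ℤ)+1) (by omega),
      motzkinM_gt ω n ((n:ℤ)+1+1) (by omega)]
    ring

lemma motzkinM_succ (ω : ℚ) (n : ℕ) (l : ℤ) (h : ¬ l < 0) :
    motzkinM ω (n+1) l
      = motzkinM ω n (l-1) + ω * motzkinM ω n l + motzkinM ω n (l+1) := by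
  simp [motzkinM, h]

lemma inverse_identity (ω : ℚ) : ∀ (j : ℕ) (l : ℤ),
    ∑ k ∈ Finset.range (j+1), minv ω j k * motzkinM ω k l
      = if l = j then 1 else 0 := by
  intro j
  induction j using Nat.strong_induction_on with
  | _ j ih =>
    match j with
    | 0 =>
      intro l
      simp [minv_diag ω 0, motzkinM]
    | 1 =>
      intro l
      rw [Finset.sum_range_succ, Finset.sum_range_succ, Finset.sum_range_zero]
      rw [minv_one_zero, minv_diag]
      by_cases hl : l < 0
      · rw [motzkinM_neg_s11 ω 0 l hl, motzkinM_neg_s11 ω 1 l hl, if_neg (by omega)]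
        ring
      · rw [motzkinM_succ ω 0 l hl]
        simp only [motzkinM]
        by_cases h0 : l = 0
        · subst h0; norm_num
        · by_cases h1 : l = 1
          · subst h1; norm_num
          · rw [if_neg h0, if_neg (by omega : ¬ l - 1 = 0), if_neg (by omega : ¬ l + 1 = 0),
              if_neg (by push_cast; omega)]
            ring
    | (j+2) =>
      intro l
      by_cases hl : l < 0
      · rw [Finset.sum_eq_zero, if_neg (by omega)]
        intro k _
        rw [motzkinM_neg_s11 ω k l hl, mul_zero]
      · -- main step
        have hS1 := ih (j+1) (by omega)
        have hS0 := ih j (by omega)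
        rw [Finset.sum_range_succ']
        -- rewrite recurrences
        have step : ∀ k ∈ Finset.range (j+2),
            minv ω (j+2) (k+1) * motzkinM ω (k+1) l
              = minv ω (j+1) k * motzkinM ω k (l-1)
                + ω * (minv ω (j+1) k * motzkinM ω k l)
                + minv ω (j+1) k * motzkinM ω k (l+1)
                - ω * (minv ω (j+1) (k+1) * motzkinM ω (k+1) l)
                - minv ω j (k+1) * motzkinM ω (k+1) l := by
          intro k _
          rw [minv_rec, motzkinM_succ ω k l hl]
          ring
        rw [Finset.sum_congr rfl step]
        simp only [Finset.sum_sub_distrib, Finset.sum_add_distrib, ← Finset.mul_sum]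
        -- Now assemble pieces
        have hU2 : ∑ k ∈ Finset.range (j+2), minv ω (j+1) (k+1) * motzkinM ω (k+1) l
            = (∑ k ∈ Finset.range (j+2), minv ω (j+1) k * motzkinM ω k l)
              + minv ω (j+1) (j+2) * motzkinM ω (j+2) l
              - minv ω (j+1) 0 * motzkinM ω 0 l := by
          have h1 := Finset.sum_range_succ' (fun k => minv ω (j+1) k * motzkinM ω k l) (j+2)
          have h2 := Finset.sum_range_succ (fun k => minv ω (j+1) k * motzkinM ω k l) (j+2)
          linarith
        have hU3 : ∑ k ∈ Finset.range (j+2), minv ω j (k+1) * motzkinM ω (k+1) l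
            = (∑ k ∈ Finset.range (j+1), minv ω j k * motzkinM ω k l)
              + minv ω j (j+1) * motzkinM ω (j+1) l
              + minv ω j (j+2) * motzkinM ω (j+2) l
              - minv ω j 0 * motzkinM ω 0 l := by
          have h1 := Finset.sum_range_succ' (fun k => minv ω j k * motzkinM ω k l) (j+2)
          have h2 := Finset.sum_range_succ (fun k => minv ω j k * motzkinM ω k l) (j+2)
          have h3 := Finset.sum_range_succ (fun k => minv ω j k * motzkinM ω k l) (j+1)
          linarith
        rw [hU2, hU3, minv_rec0]
        rw [minv_zero_of_lt ω (show j+1 < j+2 by omega),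
          minv_zero_of_lt ω (show j < j+1 by omega),
          minv_zero_of_lt ω (show j < j+2 by omega)]
        rw [hS1 l, hS1 (l-1), hS1 (l+1), hS0 l]
        push_cast
        split_ifs <;> try ring
        all_goals omega

lemma shift1 (ω : ℚ) (a b N : ℕ) (ha : a + 2 ≤ N) :
    ∑ l ∈ Finset.range N, motzkinM ω a ((l:ℤ)-1) * motzkinM ω b l
      = ∑ l ∈ Finset.range N, motzkinM ω a l * motzkinM ω b ((l:ℤ)+1) := by
  obtain ⟨n, rfl⟩ : ∃ n, N = n + 1 := ⟨N-1, by omega⟩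
  rw [Finset.sum_range_succ' (fun l => motzkinM ω a ((l:ℤ)-1) * motzkinM ω b l) n]
  rw [Finset.sum_range_succ (fun l => motzkinM ω a l * motzkinM ω b ((l:ℤ)+1)) n]
  simp only [Nat.cast_zero, Nat.cast_add, Nat.cast_one]
  rw [motzkinM_neg_s11 ω a (0-1) (by omega), motzkinM_gt ω a n (by exact_mod_cast by omega)]
  rw [zero_mul, add_zero, zero_mul, add_zero]
  apply Finset.sum_congr rfl
  intro l _
  rw [show (l:ℤ) + 1 - 1 = l by ring]

lemma shift_step (ω : ℚ) (i k N : ℕ) (hi : i + 2 ≤ N) (hk : k + 2 ≤ N) :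
    ∑ l ∈ Finset.range N, motzkinM ω (i+1) l * motzkinM ω k l
      = ∑ l ∈ Finset.range N, motzkinM ω i l * motzkinM ω (k+1) l := by
  have e1 : ∀ l ∈ Finset.range N,
      motzkinM ω (i+1) l * motzkinM ω k l
        = motzkinM ω i ((l:ℤ)-1) * motzkinM ω k l
          + ω * (motzkinM ω i l * motzkinM ω k l)
          + motzkinM ω i ((l:ℤ)+1) * motzkinM ω k l := by
    intro l _
    rw [motzkinM_succ ω i l (by omega)]
    ring
  have e2 : ∀ l ∈ Finset.range N,
      motzkinM ω i l * motzkinM ω (k+1) l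
        = motzkinM ω k ((l:ℤ)-1) * motzkinM ω i l
          + ω * (motzkinM ω i l * motzkinM ω k l)
          + motzkinM ω k ((l:ℤ)+1) * motzkinM ω i l := by
    intro l _
    rw [motzkinM_succ ω k l (by omega)]
    ring
  rw [Finset.sum_congr rfl e1, Finset.sum_congr rfl e2]
  simp only [Finset.sum_add_distrib]
  have s1 := shift1 ω i k N hi
  have s2 := shift1 ω k i N hk
  have s1' : ∑ l ∈ Finset.range N, motzkinM ω i ((l:ℤ)+1) * motzkinM ω k l
      = ∑ l ∈ Finset.range N, motzkinM ω k ((l:ℤ)-1) * motzkinM ω i l := by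
    rw [s2]
    apply Finset.sum_congr rfl
    intro l _
    ring
  have s2' : ∑ l ∈ Finset.range N, motzkinM ω i ((l:ℤ)-1) * motzkinM ω k l
      = ∑ l ∈ Finset.range N, motzkinM ω k ((l:ℤ)+1) * motzkinM ω i l := by
    rw [s1]
    apply Finset.sum_congr rfl
    intro l _
    ring
  rw [s1', s2']
  ring

lemma conv (ω : ℚ) : ∀ i k : ℕ,
    motzkinM ω (i+k) 0
      = ∑ l ∈ Finset.range (i+k+2), motzkinM ω i l * motzkinM ω k l := by
  intro i
  induction i with
  | zero =>
    intro k
    rw [Finset.sum_eq_single 0]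
    · have : motzkinM ω 0 (0:ℤ) = 1 := by simp [motzkinM]
      rw [show ((0:ℕ):ℤ) = (0:ℤ) by norm_num, this, one_mul, zero_add]
    · intro l _ hl
      rw [show motzkinM ω 0 (l:ℤ) = 0 by simp [motzkinM]; exact_mod_cast hl, zero_mul]
    · intro h
      exact absurd (Finset.mem_range.2 (by omega)) h
  | succ i ih =>
    intro k
    have h1 : i + 1 + k = i + (k + 1) := by omega
    have h2 : i + 1 + k + 2 = i + (k+1) + 2 := by omega
    rw [h1, ih (k+1)]
    exact (shift_step ω i k (i+(k+1)+2) (by omega) (by omega)).symm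


lemma conv' (ω : ℚ) (i k : ℕ) :
    motzkinM ω (i+k) 0 = ∑ l ∈ Finset.range (i+1), motzkinM ω i l * motzkinM ω k l := by
  rw [conv ω i k]
  symm
  apply Finset.sum_subset
  · intro x hx
    simp only [Finset.mem_range] at *
    omega
  · intro x _ hx
    simp only [Finset.mem_range, not_lt] at hx
    rw [motzkinM_gt ω i x (by exact_mod_cast by omega), zero_mul]

theorem minv_motzkin_orthogonality (ω : ℚ) (i j : ℕ) (h : i ≤ j) :
    ∑ k ∈ Finset.range (j+1), minv ω j k * motzkinM ω (i+k) 0 =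
      if i = j then (1 : ℚ) else 0 := by
  have e1 : ∀ k ∈ Finset.range (j+1),
      minv ω j k * motzkinM ω (i+k) 0
        = ∑ l ∈ Finset.range (i+1), minv ω j k * (motzkinM ω i l * motzkinM ω k l) := by
    intro k _
    rw [conv' ω i k, Finset.mul_sum]
  rw [Finset.sum_congr rfl e1, Finset.sum_comm]
  have e2 : ∀ l ∈ Finset.range (i+1),
      ∑ k ∈ Finset.range (j+1), minv ω j k * (motzkinM ω i l * motzkinM ω k l)
        = motzkinM ω i l * (if (l:ℤ) = (j:ℤ) then 1 else 0) := by
    intro l _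
    rw [← inverse_identity ω j (l:ℤ), Finset.mul_sum]
    apply Finset.sum_congr rfl
    intro k _
    ring
  rw [Finset.sum_congr rfl e2]
  by_cases hij : i = j
  · subst hij
    rw [if_pos rfl, Finset.sum_eq_single i]
    · rw [if_pos rfl, motzkinM_diag, mul_one]
    · intro l hl hne
      rw [if_neg (by exact_mod_cast hne), mul_zero]
    · intro hmem
      exact absurd (Finset.mem_range.2 (by omega)) hmem
  · rw [if_neg hij, Finset.sum_eq_zero]
    intro l hl
    simp only [Finset.mem_range] at hl
    rw [if_neg (by exact_mod_cast by omega), mul_zero]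
end

section
/- The Hankel determinant of weighted Motzkin numbers det(M_{i+j;ω})_{0≤i,j≤n} equals 1 for every n ≥ 0 and every weight ω. -/
open scoped BigOperators

open Matrix

def T (ω : ℚ) : ℕ → ℤ → ℤ → ℚ
  | 0, k, m => if k = m ∧ 0 ≤ k then 1 else 0
  | n+1, k, m => if m < 0 then 0 else
      T ω n k (m-1) + ω * T ω n k m + T ω n k (m+1)

lemma T_zero (ω : ℚ) (k m : ℤ) : T ω 0 k m = if k = m ∧ 0 ≤ k then 1 else 0 := rfl

lemma T_succ (ω : ℚ) (n : ℕ) (k m : ℤ) : T ω (n+1) k m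
    = if m < 0 then 0 else T ω n k (m-1) + ω * T ω n k m + T ω n k (m+1) := rfl

lemma T_neg_right (ω : ℚ) (n : ℕ) (k m : ℤ) (hm : m < 0) : T ω n k m = 0 := by
  cases n with
  | zero => rw [T_zero, if_neg (by omega)]
  | succ n => rw [T_succ, if_pos hm]

lemma T_neg_left (ω : ℚ) (n : ℕ) (k : ℤ) (hk : k < 0) : ∀ m, T ω n k m = 0 := by
  induction n with
  | zero => intro m; rw [T_zero, if_neg (by omega)]
  | succ n ih => intro m; rw [T_succ, ih, ih, ih]; split_ifs <;> ring

lemma T_first (ω : ℚ) (k : ℤ) (hk : 0 ≤ k) (n : ℕ) :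
    ∀ m, T ω (n+1) k m = T ω n (k-1) m + ω * T ω n k m + T ω n (k+1) m := by
  induction n with
  | zero =>
    intro m
    rw [T_succ, T_zero, T_zero, T_zero, T_zero, T_zero]
    split_ifs <;> (try (exfalso; omega)) <;> ring
  | succ n ih =>
    intro m
    conv_rhs => rw [T_succ, T_succ, T_succ]
    conv_lhs => rw [T_succ, ih (m-1), ih m, ih (m+1)]
    split_ifs <;> ring

lemma T_symm (ω : ℚ) (n : ℕ) : ∀ k m : ℤ, 0 ≤ k → 0 ≤ m → T ω n k m = T ω n m k := by
  induction n with
  | zero =>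
    intro k m _ _
    rw [T_zero, T_zero]
    split_ifs <;> (try rfl) <;> (exfalso; omega)
  | succ n ih =>
    intro k m hk hm
    rw [T_first ω m hm n k, T_succ, if_neg (by omega)]
    rcases lt_or_ge (m-1) 0 with h | h
    · rw [T_neg_right ω n k (m-1) (by omega), T_neg_left ω n (m-1) (by omega) k,
        ih k m hk hm, ih k (m+1) hk (by omega)]
    · rw [ih k (m-1) hk h, ih k m hk hm, ih k (m+1) hk (by omega)]

lemma T_vanish (ω : ℚ) (n : ℕ) : ∀ k m : ℤ, k + n < m → T ω n k m = 0 := by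
  induction n with
  | zero => intro k m h; rw [T_zero, if_neg (by omega)]
  | succ n ih =>
    intro k m h
    rw [T_succ, ih k (m-1) (by push_cast at h ⊢; omega), ih k m (by push_cast at h ⊢; omega),
      ih k (m+1) (by push_cast at h ⊢; omega)]
    split_ifs <;> ring

lemma T_diag (ω : ℚ) (n : ℕ) : ∀ k : ℤ, 0 ≤ k → T ω n k (k + n) = 1 := by
  induction n with
  | zero => intro k hk; rw [T_zero, if_pos ⟨by omega, hk⟩]
  | succ n ih =>
    intro k hk
    rw [T_succ, if_neg (by omega), show k + (n+1:ℕ) - 1 = k + n by push_cast; ring, ih k hk,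
      T_vanish ω n k (k + (n+1:ℕ)) (by push_cast; omega),
      T_vanish ω n k (k + (n+1:ℕ) + 1) (by push_cast; omega)]
    ring

lemma T_conv (ω : ℚ) (a N : ℕ) : ∀ (b : ℕ) (p m : ℤ), 0 ≤ p → p + a < N →
    T ω (a+b) p m = ∑ k ∈ Finset.range N, T ω a p (k:ℤ) * T ω b (k:ℤ) m := by
  intro b
  induction b with
  | zero =>
    intro p m hp hN
    rcases lt_or_ge m 0 with hm | hm
    · rw [Nat.add_zero, T_neg_right ω a p m hm]
      refine (Finset.sum_eq_zero fun k _ => ?_).symm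
      rw [T_zero, if_neg (by omega), mul_zero]
    · obtain ⟨m', rfl⟩ : ∃ m' : ℕ, m = (m' : ℤ) := ⟨m.toNat, by omega⟩
      rcases lt_or_ge m' N with hm' | hm'
      · rw [Nat.add_zero, Finset.sum_eq_single m']
        · rw [T_zero, if_pos ⟨rfl, by positivity⟩, mul_one]
        · intro k _ hk
          rw [T_zero, if_neg (fun hc => hk (by exact_mod_cast hc.1)), mul_zero]
        · intro h; exact absurd (Finset.mem_range.2 hm') h
      · rw [Nat.add_zero, T_vanish ω a p m' (by omega)]
        refine (Finset.sum_eq_zero fun k hk => ?_).symm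
        rw [T_zero, if_neg (fun hc => by
          have := Finset.mem_range.1 hk
          have : (k:ℤ) = m' := hc.1
          omega), mul_zero]
  | succ b ih =>
    intro p m hp hN
    rw [show a + (b+1) = (a+b)+1 from rfl, T_succ]
    rcases lt_or_ge m 0 with hm | hm
    · rw [if_pos hm]
      refine (Finset.sum_eq_zero fun k _ => ?_).symm
      rw [T_neg_right ω (b+1) (k:ℤ) m hm, mul_zero]
    · rw [if_neg (by omega), ih p (m-1) hp hN, ih p m hp hN, ih p (m+1) hp hN,
        Finset.mul_sum, ← Finset.sum_add_distrib, ← Finset.sum_add_distrib]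
      refine Finset.sum_congr rfl fun k _ => ?_
      rw [T_succ, if_neg (by omega)]
      ring

lemma motzkinM_eq_T (ω : ℚ) (n : ℕ) : ∀ m : ℤ, motzkinM ω n m = T ω n 0 m := by
  induction n with
  | zero =>
    intro m
    rw [show motzkinM ω 0 m = if m = 0 then 1 else 0 from rfl, T_zero]
    split_ifs <;> (try rfl) <;> (exfalso; omega)
  | succ n ih =>
    intro m
    rw [show motzkinM ω (n+1) m = if m < 0 then 0 else
      motzkinM ω n (m-1) + ω * motzkinM ω n m + motzkinM ω n (m+1) from rfl,
      T_succ, ih, ih, ih]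

theorem motzkin_hankel_det_one (ω : ℚ) (n : ℕ) :
    Matrix.det (Matrix.of fun i j : Fin (n+1) => motzkinM ω (i.val + j.val) 0) = 1 := by
  set A : Matrix (Fin (n+1)) (Fin (n+1)) ℚ :=
    Matrix.of (fun i k : Fin (n+1) => T ω i.val 0 (k.val : ℤ)) with hA
  have hfac : (Matrix.of fun i j : Fin (n+1) => motzkinM ω (i.val + j.val) 0)
      = A * A.transpose := by
    ext i j
    rw [Matrix.mul_apply]
    simp only [hA, Matrix.of_apply, Matrix.transpose_apply]
    rw [motzkinM_eq_T, T_conv ω i.val (n+1) j.val 0 0 le_rfl (by omega),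
      ← Fin.sum_univ_eq_sum_range (fun k => T ω i.val 0 (k:ℤ) * T ω j.val (k:ℤ) 0)]
    refine Finset.sum_congr rfl fun k _ => ?_
    rw [T_symm ω j.val (k.val : ℤ) 0 (by positivity) le_rfl]
  have hAdet : A.det = 1 := by
    rw [Matrix.det_of_lowerTriangular A (fun i j hij => by
      simp only [hA, Matrix.of_apply]
      exact T_vanish ω i.val 0 j.val (by
        have : (i:ℕ) < (j:ℕ) := hij
        omega))]
    refine Finset.prod_eq_one fun i _ => ?_
    simpa [hA] using T_diag ω i.val 0 le_rfl
  rw [hfac, Matrix.det_mul, Matrix.det_transpose, hAdet]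
  norm_num
end

section
/- The shifted Hankel determinant of weighted Motzkin numbers satisfies det(M_{i+j+1;ω})_{0≤i,j≤n−1} = Σ_{k=0}^{⌊n/2⌋} C(n−k,k)·(−1)^k·ω^{n−2k}. -/
open scoped BigOperators
open Matrix

lemma motz_neg (ω : ℚ) (n : ℕ) (j : ℤ) (h : j < 0) : motzkinM ω n j = 0 := by
  cases n with
  | zero => simp [motzkinM, h.ne]
  | succ n => simp [motzkinM, h]

lemma motz_succ (ω : ℚ) (n : ℕ) (j : ℤ) (h : 0 ≤ j) :
    motzkinM ω (n+1) j =
      motzkinM ω n (j-1) + ω * motzkinM ω n j + motzkinM ω n (j+1) := by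
  simp [motzkinM, not_lt.mpr h]

lemma motz_big (ω : ℚ) : ∀ (n : ℕ) (j : ℤ), (n : ℤ) < j → motzkinM ω n j = 0 := by
  intro n
  induction n with
  | zero => intro j h; simp [motzkinM]; omega
  | succ n ih =>
    intro j h
    rcases lt_or_ge j 0 with hj | hj
    · exact motz_neg ω _ _ hj
    · rw [motz_succ ω n j hj, ih (j-1) (by push_cast at h ⊢; omega),
        ih j (by push_cast at h ⊢; omega), ih (j+1) (by push_cast at h ⊢; omega)]
      ring

lemma motz_diag (ω : ℚ) : ∀ n : ℕ, motzkinM ω n n = 1 := by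
  intro n
  induction n with
  | zero => simp [motzkinM]
  | succ n ih =>
    rw [motz_succ ω n _ (by positivity)]
    have h1 : ((n:ℤ)+1) - 1 = n := by ring
    push_cast
    rw [h1, ih, motz_big ω n ((n:ℤ)+1) (by omega), motz_big ω n ((n:ℤ)+1+1) (by omega)]
    ring

lemma motz_step (ω : ℚ) (a b N : ℕ) (ha : a < N) (hb : b < N) :
    ∑ k ∈ Finset.range N, motzkinM ω (a+1) k * motzkinM ω b k =
    ∑ k ∈ Finset.range N, motzkinM ω a k * motzkinM ω (b+1) k := by
  obtain ⟨M, rfl⟩ : ∃ M, N = M + 1 := ⟨N - 1, by omega⟩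
  have expand : ∀ c k : ℕ, motzkinM ω (c+1) (k:ℤ) =
      motzkinM ω c ((k:ℤ)-1) + ω * motzkinM ω c k + motzkinM ω c ((k:ℤ)+1) :=
    fun c k => motz_succ ω c k (by positivity)
  have L1 : ∑ k ∈ Finset.range (M+1), motzkinM ω a ((k:ℤ)-1) * motzkinM ω b k =
      ∑ k ∈ Finset.range (M+1), motzkinM ω a k * motzkinM ω b ((k:ℤ)+1) := by
    rw [Finset.sum_range_succ' (fun k => motzkinM ω a ((k:ℤ)-1) * motzkinM ω b k) M,
        Finset.sum_range_succ (fun k => motzkinM ω a k * motzkinM ω b ((k:ℤ)+1)) M]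
    simp only [Nat.cast_zero, Nat.cast_add, Nat.cast_one, zero_sub]
    rw [motz_neg ω a (-1) (by norm_num), motz_big ω b ((M:ℤ)+1) (by push_cast; omega)]
    simp only [zero_mul, mul_zero, add_zero]
    apply Finset.sum_congr rfl
    intro k _
    push_cast
    ring_nf
  have L2 : ∑ k ∈ Finset.range (M+1), motzkinM ω a ((k:ℤ)+1) * motzkinM ω b k =
      ∑ k ∈ Finset.range (M+1), motzkinM ω a k * motzkinM ω b ((k:ℤ)-1) := by
    rw [Finset.sum_range_succ' (fun k => motzkinM ω a k * motzkinM ω b ((k:ℤ)-1)) M,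
        Finset.sum_range_succ (fun k => motzkinM ω a ((k:ℤ)+1) * motzkinM ω b k) M]
    simp only [Nat.cast_zero, Nat.cast_add, Nat.cast_one, zero_sub]
    rw [motz_neg ω b (-1) (by norm_num), motz_big ω a ((M:ℤ)+1) (by push_cast; omega)]
    simp only [zero_mul, mul_zero, add_zero]
    apply Finset.sum_congr rfl
    intro k _
    push_cast
    ring_nf
  calc ∑ k ∈ Finset.range (M+1), motzkinM ω (a+1) k * motzkinM ω b k
      = ∑ k ∈ Finset.range (M+1), (motzkinM ω a ((k:ℤ)-1) * motzkinM ω b k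
          + ω * (motzkinM ω a k * motzkinM ω b k)
          + motzkinM ω a ((k:ℤ)+1) * motzkinM ω b k) := by
        apply Finset.sum_congr rfl; intro k _; rw [expand a k]; ring
    _ = ∑ k ∈ Finset.range (M+1), (motzkinM ω a k * motzkinM ω b ((k:ℤ)+1)
          + ω * (motzkinM ω a k * motzkinM ω b k)
          + motzkinM ω a k * motzkinM ω b ((k:ℤ)-1)) := by
        simp only [Finset.sum_add_distrib]
        rw [L1, L2]
    _ = ∑ k ∈ Finset.range (M+1), motzkinM ω a k * motzkinM ω (b+1) k := by
        apply Finset.sum_congr rfl; intro k _; rw [expand b k]; ring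

lemma motz_conv (ω : ℚ) : ∀ (b a N : ℕ), a + b < N →
    ∑ k ∈ Finset.range N, motzkinM ω a k * motzkinM ω b k = motzkinM ω (a+b) 0 := by
  intro b
  induction b with
  | zero =>
    intro a N h
    have : ∀ k : ℕ, motzkinM ω a k * motzkinM ω 0 k
        = if k = 0 then motzkinM ω a 0 else 0 := by
      intro k
      simp only [motzkinM]
      rcases eq_or_ne k 0 with rfl | hk
      · simp
      · simp [hk, Nat.cast_eq_zero]
    have hN : 0 < N := by omega
    rw [Finset.sum_congr rfl (fun k _ => this k), Finset.sum_ite_eq' (Finset.range N) 0]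
    simp [Finset.mem_range, hN]
  | succ b ih =>
    intro a N h
    rw [← motz_step ω a b N (by omega) (by omega), ih (a+1) N (by omega)]
    congr 1
    omega

def tri (ω : ℚ) (k l : ℕ) : ℚ :=
  (if l + 1 = k then 1 else 0) + (if l = k then ω else 0) + (if l = k + 1 then 1 else 0)

/-- key row computation: ∑_l tri k l * m j l = m (j+1) k -/
lemma tri_row (ω : ℚ) (n j k : ℕ) (hj : j < n) (hk : k < n) :
    ∑ l ∈ Finset.range n, tri ω k l * motzkinM ω j l = motzkinM ω (j+1) k := by
  have expand : motzkinM ω (j+1) (k:ℤ) =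
      motzkinM ω j ((k:ℤ)-1) + ω * motzkinM ω j k + motzkinM ω j ((k:ℤ)+1) :=
    motz_succ ω j k (by positivity)
  simp only [tri, add_mul, Finset.sum_add_distrib, ite_mul, one_mul, zero_mul]
  have h2 : ∑ l ∈ Finset.range n, (if l = k then ω * motzkinM ω j l else 0)
      = ω * motzkinM ω j k := by
    rw [Finset.sum_ite_eq' (Finset.range n) k]
    simp [hk]
  have h3 : ∑ l ∈ Finset.range n, (if l = k + 1 then motzkinM ω j l else 0)
      = motzkinM ω j ((k:ℤ)+1) := by
    rw [Finset.sum_ite_eq' (Finset.range n) (k+1)]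
    rcases lt_or_ge (k+1) n with h | h
    · simp [h]
    · simp [not_lt.mpr h]
      rw [motz_big ω j ((k:ℤ)+1) (by push_cast; omega)]
  have h1 : ∑ l ∈ Finset.range n, (if l + 1 = k then motzkinM ω j l else 0)
      = motzkinM ω j ((k:ℤ)-1) := by
    rcases k with _ | k'
    · simp only [Nat.add_one_ne_zero, if_false, Finset.sum_const_zero]
      rw [motz_neg ω j _ (by norm_num)]
    · have : ∀ l, (if l + 1 = k' + 1 then motzkinM ω j (l:ℤ) else 0)
          = (if l = k' then motzkinM ω j (l:ℤ) else 0) := by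
        intro l; congr 1; simp
      rw [Finset.sum_congr rfl (fun l _ => this l), Finset.sum_ite_eq' (Finset.range n) k']
      have hk' : k' < n := by omega
      simp [hk']
  rw [expand, h1, h2, h3]

lemma hankel_factor (ω : ℚ) (n : ℕ) :
    (Matrix.of fun i j : Fin n => motzkinM ω (i.val + j.val + 1) 0) =
      (Matrix.of fun i k : Fin n => motzkinM ω i.val k.val) *
      (Matrix.of fun k l : Fin n => tri ω k.val l.val) *
      (Matrix.of fun i k : Fin n => motzkinM ω i.val k.val)ᵀ := by
  ext i j
  rw [Matrix.mul_assoc]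
  rw [Matrix.mul_apply]
  have inner : ∀ k : Fin n,
      ((Matrix.of fun k l : Fin n => tri ω k.val l.val) *
        (Matrix.of fun i k : Fin n => motzkinM ω i.val k.val)ᵀ) k j
      = motzkinM ω (j.val+1) k.val := by
    intro k
    rw [Matrix.mul_apply]
    simp only [Matrix.of_apply, Matrix.transpose_apply]
    rw [Fin.sum_univ_eq_sum_range (fun l => tri ω k.val l * motzkinM ω j.val l) n]
    exact tri_row ω n j.val k.val j.isLt k.isLt
  rw [Finset.sum_congr rfl (fun k _ => by rw [inner k])]
  simp only [Matrix.of_apply]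
  rw [Fin.sum_univ_eq_sum_range (fun k => motzkinM ω i.val k * motzkinM ω (j.val+1) k) n]
  have trunc : ∑ k ∈ Finset.range (i.val + j.val + 2),
        motzkinM ω i.val k * motzkinM ω (j.val+1) k
      = ∑ k ∈ Finset.range n, motzkinM ω i.val k * motzkinM ω (j.val+1) k := by
    rcases le_total (i.val + j.val + 2) n with h | h
    · apply Finset.sum_subset (Finset.range_subset_range.mpr h)
      intro x _ hx
      rw [motz_big ω i.val x (by simp at hx ⊢; omega)]
      ring
    · symm
      apply Finset.sum_subset (Finset.range_subset_range.mpr h)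
      intro x _ hx
      rw [motz_big ω i.val x (by simp at hx ⊢; have := i.isLt; omega)]
      ring
  rw [← trunc, motz_conv ω (j.val+1) i.val _ (by omega)]
  congr 1

def Tmat (ω : ℚ) (n : ℕ) : Matrix (Fin n) (Fin n) ℚ :=
  Matrix.of fun k l : Fin n => tri ω k.val l.val

lemma tri_shift (ω : ℚ) (a b : ℕ) : tri ω (a+1) (b+1) = tri ω a b := by
  simp only [tri, add_left_inj]

lemma tri_00 (ω : ℚ) : tri ω 0 0 = ω := by simp [tri]

lemma tri_01 (ω : ℚ) : tri ω 0 1 = 1 := by simp [tri]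

lemma tri_10 (ω : ℚ) : tri ω 1 0 = 1 := by simp [tri]

lemma tri_0big (ω : ℚ) (l : ℕ) : tri ω 0 (l+2) = 0 := by
  simp only [tri]
  rw [if_neg (by omega), if_neg (by omega), if_neg (by omega)]; ring

lemma tri_big0 (ω : ℚ) (k : ℕ) : tri ω (k+2) 0 = 0 := by
  simp only [tri]
  rw [if_neg (by omega), if_neg (by omega), if_neg (by omega)]; ring

lemma detT_rec (ω : ℚ) (n : ℕ) :
    (Tmat ω (n+2)).det = ω * (Tmat ω (n+1)).det - (Tmat ω n).det := by
  have hsub1 : (Tmat ω (n+2)).submatrix Fin.succ ((0 : Fin (n+2)).succAbove)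
      = Tmat ω (n+1) := by
    ext i j
    simp only [Matrix.submatrix_apply, Fin.succAbove_zero, Tmat, Matrix.of_apply, Fin.val_succ]
    exact tri_shift ω i.val j.val
  have hN1 : ((Tmat ω (n+2)).submatrix Fin.succ ((1 : Fin (n+2)).succAbove)).det
      = (Tmat ω n).det := by
    set N1 := (Tmat ω (n+2)).submatrix Fin.succ ((1 : Fin (n+2)).succAbove) with hN1def
    rw [Matrix.det_succ_column_zero]
    have col : ∀ i : Fin (n+1), N1 i 0 = if i.val = 0 then 1 else 0 := by
      intro i
      have h10 : (1 : Fin (n+2)).succAbove 0 = 0 := by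
        apply Fin.succAbove_of_castSucc_lt
        simp [Fin.lt_def]
      simp only [hN1def, Matrix.submatrix_apply, h10, Tmat, Matrix.of_apply, Fin.val_succ,
        Fin.val_zero]
      rcases i with ⟨iv, hi⟩
      rcases iv with _ | _ | iv
      · simpa using tri_10 ω
      · simpa using tri_big0 ω 0
      · simp only []
        rw [show iv + 1 + 1 + 1 = (iv + 1) + 2 by omega, tri_big0 ω (iv+1)]
        simp
    rw [Fin.sum_univ_succ]
    have tail : ∀ i : Fin n, (-1:ℚ) ^ ((Fin.succ i : Fin (n+1)) : ℕ) * N1 (Fin.succ i) 0 *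
        ((N1.submatrix (Fin.succ i).succAbove Fin.succ).det) = 0 := by
      intro i
      rw [col]
      simp [Fin.val_succ]
    rw [Finset.sum_congr rfl (fun i _ => tail i), Finset.sum_const_zero, add_zero]
    rw [col]
    have hsub2 : N1.submatrix ((0 : Fin (n+1)).succAbove) Fin.succ = Tmat ω n := by
      ext i j
      have hsa : (1 : Fin (n+2)).succAbove (Fin.succ j) = Fin.succ (Fin.succ j) := by
        apply Fin.succAbove_of_le_castSucc
        simp [Fin.le_def]
      simp only [hN1def, Matrix.submatrix_apply, Fin.succAbove_zero, hsa, Tmat, Matrix.of_apply,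
        Fin.val_succ]
      rw [tri_shift, tri_shift]
    rw [hsub2]
    simp
  rw [show n+2 = (n+1)+1 from rfl, Matrix.det_succ_row_zero, Fin.sum_univ_succ, Fin.sum_univ_succ]
  have tail : ∀ j : Fin n, (-1:ℚ) ^ (((Fin.succ (Fin.succ j)) : Fin (n+2)) : ℕ) *
      (Tmat ω (n+2)) 0 (Fin.succ (Fin.succ j)) *
      ((Tmat ω (n+2)).submatrix Fin.succ (Fin.succ (Fin.succ j)).succAbove).det = 0 := by
    intro j
    have : (Tmat ω (n+2)) 0 (Fin.succ (Fin.succ j)) = 0 := by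
      simp only [Tmat, Matrix.of_apply, Fin.val_succ, Fin.val_zero]
      exact tri_0big ω j.val
    rw [this]
    ring
  rw [Finset.sum_congr rfl (fun j _ => tail j), Finset.sum_const_zero, add_zero]
  have e00 : (Tmat ω (n+2)) 0 0 = ω := by
    simpa [Tmat] using tri_00 ω
  have e01 : (Tmat ω (n+2)) 0 (Fin.succ 0) = 1 := by
    simp only [Tmat, Matrix.of_apply, Fin.val_succ, Fin.val_zero]
    exact tri_01 ω
  have hN1' : ((Tmat ω (n+2)).submatrix Fin.succ ((Fin.succ (0 : Fin (n+1))).succAbove)).det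
      = (Tmat ω n).det := by rw [Fin.succ_zero_eq_one]; exact hN1
  rw [e00, e01, hsub1, hN1']
  simp
  ring

def Spoly (ω : ℚ) (n : ℕ) : ℚ :=
  ∑ k ∈ Finset.range (n/2 + 1), ((n-k).choose k : ℚ) * (-1) ^ k * ω ^ (n - 2*k)

lemma Spoly_zero (ω : ℚ) : Spoly ω 0 = 1 := by simp [Spoly]

lemma Spoly_one (ω : ℚ) : Spoly ω 1 = ω := by simp [Spoly]

lemma Spoly_rec (ω : ℚ) (n : ℕ) : Spoly ω (n+2) = ω * Spoly ω (n+1) - Spoly ω n := by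
  have hrange : (n+2)/2 + 1 = (n/2 + 1) + 1 := by omega
  have step1 : Spoly ω (n+2) =
      (∑ k ∈ Finset.range (n/2+1),
        ((n+1-k).choose (k+1) : ℚ) * (-1)^(k+1) * ω^(n-2*k)) + ω^(n+2) := by
    rw [Spoly, hrange, Finset.sum_range_succ'
      (fun k => ((n+2-k).choose k : ℚ) * (-1)^k * ω^(n+2-2*k)) (n/2+1)]
    congr 1
    · apply Finset.sum_congr rfl
      intro k hk
      simp only [Finset.mem_range] at hk
      have h1 : n+2-(k+1) = n+1-k := by omega
      have h2 : n+2-2*(k+1) = n-2*k := by omega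
      rw [h1, h2]
    · simp
  have pascal : ∀ k ∈ Finset.range (n/2+1),
      ((n+1-k).choose (k+1) : ℚ) * (-1)^(k+1) * ω^(n-2*k) =
      -(((n-k).choose k : ℚ) * (-1)^k * ω^(n-2*k))
      - ((n-k).choose (k+1) : ℚ) * (-1)^k * ω^(n-2*k) := by
    intro k hk
    simp only [Finset.mem_range] at hk
    have h1 : n+1-k = (n-k)+1 := by omega
    rw [h1, Nat.choose_succ_succ]
    push_cast
    ring
  have step2 : Spoly ω (n+2) = ω^(n+2) - Spoly ω n -
      ∑ k ∈ Finset.range (n/2+1), ((n-k).choose (k+1) : ℚ) * (-1)^k * ω^(n-2*k) := by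
    rw [step1, Finset.sum_congr rfl pascal]
    simp only [Finset.sum_sub_distrib, Finset.sum_neg_distrib]
    rw [Spoly]
    ring
  have Bval : ∑ k ∈ Finset.range (n/2+1), ((n-k).choose (k+1) : ℚ) * (-1)^k * ω^(n-2*k)
      = ∑ k ∈ Finset.range ((n+1)/2), ((n-k).choose (k+1) : ℚ) * (-1)^k * ω^(n-2*k) := by
    symm
    apply Finset.sum_subset (Finset.range_subset_range.mpr (by omega))
    intro x hx hnx
    simp only [Finset.mem_range] at hx hnx
    have : (n-x).choose (x+1) = 0 := Nat.choose_eq_zero_of_lt (by omega)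
    rw [this]
    push_cast
    ring
  have step3 : ω * Spoly ω (n+1) = ω^(n+2) -
      ∑ k ∈ Finset.range ((n+1)/2), ((n-k).choose (k+1) : ℚ) * (-1)^k * ω^(n-2*k) := by
    rw [Spoly, Finset.mul_sum, Finset.sum_range_succ'
      (fun k => ω * (((n+1-k).choose k : ℚ) * (-1)^k * ω^(n+1-2*k))) ((n+1)/2)]
    have term0 : ω * (((n+1-0).choose 0 : ℚ) * (-1)^0 * ω^(n+1-2*0)) = ω^(n+2) := by
      simp [pow_succ]
      ring
    rw [term0]
    have terms : ∀ k ∈ Finset.range ((n+1)/2),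
        ω * (((n+1-(k+1)).choose (k+1) : ℚ) * (-1)^(k+1) * ω^(n+1-2*(k+1))) =
        -(((n-k).choose (k+1) : ℚ) * (-1)^k * ω^(n-2*k)) := by
      intro k hk
      simp only [Finset.mem_range] at hk
      have h1 : n+1-(k+1) = n-k := by omega
      have h2 : n+1-2*(k+1) = n-2*k-1 := by omega
      have h3 : n-2*k-1+1 = n-2*k := by omega
      rw [h1, h2]
      have h4 : ω ^ (n-2*k) = ω * ω ^ (n-2*k-1) := by
        rw [← pow_succ', h3]
      push_cast
      rw [h4]
      ring
    rw [Finset.sum_congr rfl terms]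
    simp only [Finset.sum_neg_distrib]
    ring
  rw [step2, Bval, step3]
  ring


lemma detL (ω : ℚ) (n : ℕ) :
    (Matrix.of fun i k : Fin n => motzkinM ω i.val k.val).det = 1 := by
  rw [Matrix.det_of_lowerTriangular _ (fun i j hij => by
    simp only [Matrix.of_apply]
    exact motz_big ω i.val j.val (by exact_mod_cast (show (i:ℕ) < (j:ℕ) from hij)))]
  apply Finset.prod_eq_one
  intro i _
  simpa using motz_diag ω i.val

lemma detT_eq_Spoly (ω : ℚ) : ∀ n, (Tmat ω n).det = Spoly ω n := by
  have key : ∀ n, (Tmat ω n).det = Spoly ω n ∧ (Tmat ω (n+1)).det = Spoly ω (n+1) := by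
    intro n
    induction n with
    | zero =>
      constructor
      · rw [Matrix.det_fin_zero, Spoly_zero]
      · rw [Matrix.det_fin_one, Spoly_one]
        simpa [Tmat] using tri_00 ω
    | succ n ih => exact ⟨ih.2, by rw [detT_rec, ih.1, ih.2, Spoly_rec]⟩
  exact fun n => (key n).1

theorem motzkin_hankel2_det (ω : ℚ) (n : ℕ) :
    Matrix.det (Matrix.of fun i j : Fin n => motzkinM ω (i.val + j.val + 1) 0) =
      ∑ k ∈ Finset.range (n/2 + 1),
        ((n-k).choose k : ℚ) * (-1) ^ k * ω ^ (n - 2*k) := by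
  have hS : Spoly ω n = ∑ k ∈ Finset.range (n/2 + 1),
      ((n-k).choose k : ℚ) * (-1) ^ k * ω ^ (n - 2*k) := rfl
  rw [← hS, hankel_factor ω n, Matrix.det_mul, Matrix.det_mul, Matrix.det_transpose,
    detL ω n]
  have hT : (Matrix.of fun k l : Fin n => tri ω k.val l.val).det = Spoly ω n :=
    detT_eq_Spoly ω n
  rw [hT]
  ring
end

section
/- The Hankel determinants of weighted Motzkin numbers satisfy the recursion det(M_{i+j+2;ω})_{0≤i,j≤n−1} = det(M_{i+j+2;ω})_{0≤i,j≤n−2} + (det(M_{i+j+1;ω})_{0≤i,j≤n−1})². -/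
open scoped BigOperators

namespace MotzkinAux
variable (ω : ℚ)

lemma mz_neg : ∀ (n : ℕ) {j : ℤ}, j < 0 → motzkinM ω n j = 0
  | 0, j, hj => by rw [motzkinM]; exact if_neg (by omega)
  | n+1, j, hj => by rw [motzkinM]; exact if_pos hj

lemma mz_rec (n : ℕ) {j : ℤ} (hj : 0 ≤ j) :
    motzkinM ω (n+1) j = motzkinM ω n (j-1) + ω * motzkinM ω n j + motzkinM ω n (j+1) := by
  rw [motzkinM]; exact if_neg (by omega)

lemma mz_gt : ∀ (n : ℕ) {j : ℤ}, (n:ℤ) < j → motzkinM ω n j = 0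
  | 0, j, hj => by rw [motzkinM]; exact if_neg (by omega)
  | n+1, j, hj => by
      rw [mz_rec ω n (by omega), mz_gt n (by omega),
        mz_gt n (by omega), mz_gt n (by omega)]
      ring

lemma mz_diag : ∀ n : ℕ, motzkinM ω n (n:ℤ) = 1
  | 0 => by rw [motzkinM]; simp
  | n+1 => by
      push_cast
      rw [mz_rec ω n (by positivity), show (n:ℤ) + 1 - 1 = n by ring, mz_diag n,
        mz_gt ω n (by omega), mz_gt ω n (by omega)]
      ring

lemma mz_zero (j : ℤ) : motzkinM ω 0 j = if j = 0 then 1 else 0 := rfl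

lemma shiftT (i j m : ℕ) (hi : i < m + 1) :
    ∑ k ∈ Finset.range (m+1), motzkinM ω i (k:ℤ) * motzkinM ω j ((k:ℤ)-1)
      = ∑ k ∈ Finset.range (m+1), motzkinM ω i ((k:ℤ)+1) * motzkinM ω j (k:ℤ) := by
  rw [Finset.sum_range_succ' (fun k : ℕ => motzkinM ω i (k:ℤ) * motzkinM ω j ((k:ℤ)-1)) m,
    Finset.sum_range_succ (fun k : ℕ => motzkinM ω i ((k:ℤ)+1) * motzkinM ω j (k:ℤ)) m]
  have e1 : motzkinM ω j (((0:ℕ):ℤ) - 1) = 0 := mz_neg ω j (by norm_num)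
  have e2 : motzkinM ω i ((m:ℤ)+1) = 0 := mz_gt ω i (by omega)
  rw [e1, e2, mul_zero, zero_mul, add_zero, add_zero]
  apply Finset.sum_congr rfl
  intro k _
  push_cast
  rw [add_sub_cancel_right]

lemma shift (i j N : ℕ) (hi : i < N) (hj : j < N) :
    ∑ k ∈ Finset.range N, motzkinM ω i (k:ℤ) * motzkinM ω (j+1) (k:ℤ)
      = ∑ k ∈ Finset.range N, motzkinM ω (i+1) (k:ℤ) * motzkinM ω j (k:ℤ) := by
  obtain ⟨m, rfl⟩ : ∃ m, N = m + 1 := ⟨N - 1, by omega⟩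
  have L : ∀ k : ℕ, motzkinM ω i (k:ℤ) * motzkinM ω (j+1) (k:ℤ)
      = motzkinM ω i (k:ℤ) * motzkinM ω j ((k:ℤ)-1)
        + ω * (motzkinM ω i (k:ℤ) * motzkinM ω j (k:ℤ))
        + motzkinM ω i (k:ℤ) * motzkinM ω j ((k:ℤ)+1) := by
    intro k; rw [mz_rec ω j (by positivity)]; ring
  have R : ∀ k : ℕ, motzkinM ω (i+1) (k:ℤ) * motzkinM ω j (k:ℤ)
      = motzkinM ω i ((k:ℤ)-1) * motzkinM ω j (k:ℤ)
        + ω * (motzkinM ω i (k:ℤ) * motzkinM ω j (k:ℤ))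
        + motzkinM ω i ((k:ℤ)+1) * motzkinM ω j (k:ℤ) := by
    intro k; rw [mz_rec ω i (by positivity)]; ring
  simp only [L, R, Finset.sum_add_distrib]
  have h1 := shiftT ω i j m hi
  have h2 : ∑ k ∈ Finset.range (m+1), motzkinM ω i ((k:ℤ)-1) * motzkinM ω j (k:ℤ)
      = ∑ k ∈ Finset.range (m+1), motzkinM ω i (k:ℤ) * motzkinM ω j ((k:ℤ)+1) := by
    calc ∑ k ∈ Finset.range (m+1), motzkinM ω i ((k:ℤ)-1) * motzkinM ω j (k:ℤ)
        = ∑ k ∈ Finset.range (m+1), motzkinM ω j (k:ℤ) * motzkinM ω i ((k:ℤ)-1) :=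
          Finset.sum_congr rfl (fun k _ => mul_comm _ _)
      _ = ∑ k ∈ Finset.range (m+1), motzkinM ω j ((k:ℤ)+1) * motzkinM ω i (k:ℤ) :=
          shiftT ω j i m hj
      _ = _ := Finset.sum_congr rfl (fun k _ => mul_comm _ _)
  linear_combination h1 - h2

lemma conv_core : ∀ (j i N : ℕ), i + j < N →
    ∑ k ∈ Finset.range N, motzkinM ω i (k:ℤ) * motzkinM ω j (k:ℤ) = motzkinM ω (i+j) 0
  | 0, i, N, h => by
      rw [Finset.sum_eq_single_of_mem 0 (Finset.mem_range.2 (by omega))]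
      · simp [mz_zero]
      · intro b _ hb
        rw [show motzkinM ω 0 (b:ℤ) = 0 from by
          rw [mz_zero]; exact if_neg (by exact_mod_cast hb), mul_zero]
  | j+1, i, N, h => by
      rw [shift ω i j N (by omega) (by omega), conv_core j (i+1) N (by omega)]
      congr 1
      omega

lemma mz_conv (i j N : ℕ) (hi : i < N) :
    ∑ k ∈ Finset.range N, motzkinM ω i (k:ℤ) * motzkinM ω j (k:ℤ) = motzkinM ω (i+j) 0 := by
  have trunc : ∀ K, i < K →
      ∑ k ∈ Finset.range K, motzkinM ω i (k:ℤ) * motzkinM ω j (k:ℤ)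
        = ∑ k ∈ Finset.range (i+1), motzkinM ω i (k:ℤ) * motzkinM ω j (k:ℤ) := by
    intro K hK
    symm
    apply Finset.sum_subset (Finset.range_subset_range.2 (by omega))
    intro x hx hx'
    have hxi : i < x := by by_contra hc; exact hx' (Finset.mem_range.2 (by omega))
    rw [mz_gt ω i (by exact_mod_cast hxi), zero_mul]
  rw [trunc N hi, ← trunc (i+j+1) (by omega), conv_core ω j i (i+j+1) (by omega)]

lemma hankel_det (m : ℕ) :
    (Matrix.of fun i j : Fin m => motzkinM ω (i.val + j.val) 0).det = 1 := by
  set A : Matrix (Fin m) (Fin m) ℚ :=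
    Matrix.of (fun i k : Fin m => motzkinM ω i.val (k.val : ℤ)) with hA
  have hfact : (Matrix.of fun i j : Fin m => motzkinM ω (i.val + j.val) 0) = A * A.transpose := by
    ext i j
    rw [Matrix.mul_apply]
    simp only [Matrix.transpose_apply, hA, Matrix.of_apply]
    rw [Fin.sum_univ_eq_sum_range (fun k : ℕ => motzkinM ω i.val (k:ℤ) * motzkinM ω j.val (k:ℤ)) m,
      mz_conv ω i.val j.val m i.isLt]
  have htri : A.BlockTriangular OrderDual.toDual := by
    intro i j hij
    exact mz_gt ω i.val (by exact_mod_cast (show i.val < j.val from hij))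
  have hdetA : A.det = 1 := by
    rw [Matrix.det_of_lowerTriangular A htri]
    apply Finset.prod_eq_one
    intro i _
    exact mz_diag ω i.val
  rw [hfact, Matrix.det_mul, Matrix.det_transpose, hdetA]
  norm_num

def cornerEquiv (n : ℕ) : (Fin 2 ⊕ Fin n) ≃ Fin (n+2) where
  toFun x := Sum.elim (fun i : Fin 2 => if i.val = 0 then (0 : Fin (n+2)) else Fin.last (n+1))
    (fun k : Fin n => ⟨k.val + 1, by omega⟩) x
  invFun i := if h0 : i.val = 0 then Sum.inl 0 else if h1 : i.val = n+1 then Sum.inl 1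
    else Sum.inr ⟨i.val - 1, by have := i.isLt; omega⟩
  left_inv := by
    rintro (i | k)
    · fin_cases i
      · simp
      · simp
    · have hk := k.isLt
      dsimp only [Sum.elim_inr]
      rw [dif_neg (by simp), dif_neg (by simp; omega)]
      simp
  right_inv := by
    intro i
    have hi := i.isLt
    dsimp only
    rcases eq_or_ne i.val 0 with h0 | h0
    · rw [dif_pos h0]
      exact Fin.ext (by simp [h0])
    · rcases eq_or_ne i.val (n+1) with h1 | h1
      · rw [dif_neg h0, dif_pos h1]
        exact Fin.ext (by simp [h1])
      · rw [dif_neg h0, dif_neg h1]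
        dsimp only [Sum.elim_inr]
        ext
        simp
        omega

lemma corner0 (n : ℕ) : cornerEquiv n (Sum.inl 0) = 0 := rfl
lemma corner1 (n : ℕ) : cornerEquiv n (Sum.inl 1) = Fin.last (n+1) := rfl
lemma cornerR (n : ℕ) (k : Fin n) : cornerEquiv n (Sum.inr k) = ⟨k.val + 1, by omega⟩ := rfl

end MotzkinAux

open MotzkinAux

theorem motzkin_hankel_recursion (ω : ℚ) (n : ℕ) :
    Matrix.det (Matrix.of fun i j : Fin (n+1) => motzkinM ω (i.val + j.val + 2) 0) =
      Matrix.det (Matrix.of fun i j : Fin n => motzkinM ω (i.val + j.val + 2) 0) +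
        (Matrix.det (Matrix.of fun i j : Fin (n+1) => motzkinM ω (i.val + j.val + 1) 0)) ^ 2 := by
  set M : Matrix (Fin (n+2)) (Fin (n+2)) ℚ :=
    Matrix.of (fun i j : Fin (n+2) => motzkinM ω (i.val + j.val) 0) with hM
  have hdetM : M.det = 1 := hankel_det ω (n+2)
  set e := cornerEquiv n with he
  set P : Matrix (Fin 2 ⊕ Fin n) (Fin 2 ⊕ Fin n) ℚ := M.submatrix e e with hP
  set Q : Matrix (Fin 2 ⊕ Fin n) (Fin 2 ⊕ Fin n) ℚ := (Matrix.adjugate M).submatrix e e with hQ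
  have hPQ : P * Q = 1 := by
    rw [hP, hQ, Matrix.submatrix_mul_equiv, Matrix.mul_adjugate, hdetM, one_smul,
      Matrix.submatrix_one_equiv]
  have hPQ' : Matrix.fromBlocks
      (P.toBlocks₁₁ * Q.toBlocks₁₁ + P.toBlocks₁₂ * Q.toBlocks₂₁)
      (P.toBlocks₁₁ * Q.toBlocks₁₂ + P.toBlocks₁₂ * Q.toBlocks₂₂)
      (P.toBlocks₂₁ * Q.toBlocks₁₁ + P.toBlocks₂₂ * Q.toBlocks₂₁)
      (P.toBlocks₂₁ * Q.toBlocks₁₂ + P.toBlocks₂₂ * Q.toBlocks₂₂)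
      = Matrix.fromBlocks 1 0 0 1 := by
    rw [← Matrix.fromBlocks_multiply, Matrix.fromBlocks_toBlocks, Matrix.fromBlocks_toBlocks,
      hPQ, Matrix.fromBlocks_one]
  have h11 : P.toBlocks₁₁ * Q.toBlocks₁₁ + P.toBlocks₁₂ * Q.toBlocks₂₁ = 1 := by
    have := congrArg Matrix.toBlocks₁₁ hPQ'
    rwa [Matrix.toBlocks_fromBlocks₁₁, Matrix.toBlocks_fromBlocks₁₁] at this
  have h21 : P.toBlocks₂₁ * Q.toBlocks₁₁ + P.toBlocks₂₂ * Q.toBlocks₂₁ = 0 := by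
    have := congrArg Matrix.toBlocks₂₁ hPQ'
    rwa [Matrix.toBlocks_fromBlocks₂₁, Matrix.toBlocks_fromBlocks₂₁] at this
  have hmul : P * Matrix.fromBlocks Q.toBlocks₁₁ 0 Q.toBlocks₂₁ 1
      = Matrix.fromBlocks 1 P.toBlocks₁₂ 0 P.toBlocks₂₂ := by
    conv_lhs => rw [← Matrix.fromBlocks_toBlocks P]
    rw [Matrix.fromBlocks_multiply, h11, h21]
    simp
  have key : M.det * (Q.toBlocks₁₁).det = (P.toBlocks₂₂).det := by
    have := congrArg Matrix.det hmul
    rw [Matrix.det_mul, Matrix.det_fromBlocks_zero₁₂, Matrix.det_fromBlocks_zero₂₁,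
      Matrix.det_one, Matrix.det_one, mul_one, one_mul] at this
    rwa [hP, Matrix.det_submatrix_equiv_self] at this
  -- identify P.toBlocks₂₂
  have hP22 : P.toBlocks₂₂ = Matrix.of (fun i j : Fin n => motzkinM ω (i.val + j.val + 2) 0) := by
    ext i j
    show M (e (Sum.inr i)) (e (Sum.inr j)) = _
    rw [he, cornerR, cornerR]
    show motzkinM ω ((i.val + 1) + (j.val + 1)) 0 = _
    rw [show i.val + 1 + (j.val + 1) = i.val + j.val + 2 by omega]
    rfl
  -- adjugate entries
  have adj00 : Matrix.adjugate M 0 0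
      = Matrix.det (Matrix.of fun i j : Fin (n+1) => motzkinM ω (i.val + j.val + 2) 0) := by
    rw [Matrix.adjugate_fin_succ_eq_det_submatrix]
    simp only [Fin.val_zero, add_zero, pow_zero, one_mul, Fin.succAbove_zero]
    congr 1
    ext i j
    show motzkinM ω (i.succ.val + j.succ.val) 0 = _
    rw [show i.succ.val + j.succ.val = i.val + j.val + 2 by simp only [Fin.val_succ]; omega]
    rfl
  have adjll : Matrix.adjugate M (Fin.last (n+1)) (Fin.last (n+1)) = 1 := by
    rw [Matrix.adjugate_fin_succ_eq_det_submatrix]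
    have hsub : M.submatrix (Fin.last (n+1)).succAbove (Fin.last (n+1)).succAbove
        = Matrix.of (fun i j : Fin (n+1) => motzkinM ω (i.val + j.val) 0) := by
      ext i j
      simp [Fin.succAbove_last, hM]
    rw [hsub, hankel_det ω (n+1), mul_one]
    exact Even.neg_one_pow ⟨n+1, by simp [Fin.val_last]⟩
  have adj0l : Matrix.adjugate M 0 (Fin.last (n+1))
      = (-1)^(n+1) * Matrix.det (Matrix.of fun i j : Fin (n+1) => motzkinM ω (i.val + j.val + 1) 0) := by
    rw [Matrix.adjugate_fin_succ_eq_det_submatrix]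
    have hsub : M.submatrix (Fin.last (n+1)).succAbove (0 : Fin (n+2)).succAbove
        = Matrix.of (fun i j : Fin (n+1) => motzkinM ω (i.val + j.val + 1) 0) := by
      ext i j
      simp only [Matrix.submatrix_apply, Fin.succAbove_last, Fin.succAbove_zero, hM,
        Matrix.of_apply, Fin.coe_castSucc, Fin.val_succ]
      rw [show i.val + (j.val + 1) = i.val + j.val + 1 by omega]
    rw [hsub, Fin.val_last, Fin.val_zero, add_zero]
  have adjl0 : Matrix.adjugate M (Fin.last (n+1)) 0
      = (-1)^(n+1) * Matrix.det (Matrix.of fun i j : Fin (n+1) => motzkinM ω (i.val + j.val + 1) 0) := by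
    rw [Matrix.adjugate_fin_succ_eq_det_submatrix]
    have hsub : M.submatrix (0 : Fin (n+2)).succAbove (Fin.last (n+1)).succAbove
        = Matrix.of (fun i j : Fin (n+1) => motzkinM ω (i.val + j.val + 1) 0) := by
      ext i j
      simp only [Matrix.submatrix_apply, Fin.succAbove_last, Fin.succAbove_zero, hM,
        Matrix.of_apply, Fin.coe_castSucc, Fin.val_succ]
      rw [show i.val + 1 + j.val = i.val + j.val + 1 by omega]
    rw [hsub, Fin.val_last, Fin.val_zero, zero_add]
  -- det of the 2x2 block
  have hQ11det : (Q.toBlocks₁₁).det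
      = Matrix.det (Matrix.of fun i j : Fin (n+1) => motzkinM ω (i.val + j.val + 2) 0)
        - (Matrix.det (Matrix.of fun i j : Fin (n+1) => motzkinM ω (i.val + j.val + 1) 0))^2 := by
    rw [Matrix.det_fin_two]
    have e00 : Q.toBlocks₁₁ 0 0 = Matrix.adjugate M 0 0 := by
      show Matrix.adjugate M (e (Sum.inl 0)) (e (Sum.inl 0)) = _; rw [he, corner0]
    have e01 : Q.toBlocks₁₁ 0 1 = Matrix.adjugate M 0 (Fin.last (n+1)) := by
      show Matrix.adjugate M (e (Sum.inl 0)) (e (Sum.inl 1)) = _; rw [he, corner0, corner1]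
    have e10 : Q.toBlocks₁₁ 1 0 = Matrix.adjugate M (Fin.last (n+1)) 0 := by
      show Matrix.adjugate M (e (Sum.inl 1)) (e (Sum.inl 0)) = _; rw [he, corner0, corner1]
    have e11 : Q.toBlocks₁₁ 1 1 = Matrix.adjugate M (Fin.last (n+1)) (Fin.last (n+1)) := by
      show Matrix.adjugate M (e (Sum.inl 1)) (e (Sum.inl 1)) = _; rw [he, corner1]
    rw [e00, e01, e10, e11, adj00, adjll, adj0l, adjl0, mul_one]
    have hs : ((-1:ℚ)^(n+1)) * ((-1:ℚ)^(n+1)) = 1 := by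
      rw [← pow_add]; exact Even.neg_one_pow ⟨n+1, by ring⟩
    linear_combination
      (-(Matrix.det (Matrix.of fun i j : Fin (n+1) => motzkinM ω (i.val + j.val + 1) 0))^2) * hs
  rw [hdetM, one_mul, hQ11det, hP22] at key
  linarith [key]
end

section
/- The Delannoy polynomial d_k(t) = Σ_{l=0}^{k} C(k−l,l)·ω^l·t^l·(1+t)^{k−2l} has generating function Σ_{k≥0} d_k(t)·x^k = 1/(1 − x − t(x + ωx²)). -/
open scoped BigOperators

/-- The weighted Delannoy polynomial d_k(t) = Σ_{l=0}^{k} C(k−l,l) ω^l t^l (1+t)^{k−2l}. -/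
noncomputable def delannoyPoly (ω : ℚ) (k : ℕ) : Polynomial ℚ :=
  ∑ l ∈ Finset.range (k+1),
    Polynomial.C (((k - l).choose l : ℚ) * ω ^ l) * Polynomial.X ^ l *
      (1 + Polynomial.X) ^ (k - 2*l)

open Polynomial in
lemma delannoy_rec (ω : ℚ) (k : ℕ) :
    delannoyPoly ω (k+2) =
      (1 + X) * delannoyPoly ω (k+1) + C ω * X * delannoyPoly ω k := by
  unfold delannoyPoly
  rw [Finset.mul_sum, Finset.mul_sum]
  set A : ℕ → ℚ[X] := fun m =>
    C (((k+1-m).choose m : ℚ) * ω^m) * X^m * (1+X)^(k+2-2*m) with hAdef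
  set B : ℕ → ℚ[X] := fun l =>
    C (((k-l).choose l : ℚ) * ω^(l+1)) * X^(l+1) * (1+X)^(k+2-2*(l+1)) with hBdef
  have hA : ∀ l, (1+X) * (C (((k+1-l).choose l : ℚ) * ω^l) * X^l * (1+X)^(k+1-2*l)) = A l := by
    intro l
    rcases le_or_gt (2*l) (k+1) with h | h
    · have h2 : k+2-2*l = (k+1-2*l)+1 := by omega
      simp only [hAdef, h2, pow_succ]
      ring
    · have h0 : (k+1-l).choose l = 0 := Nat.choose_eq_zero_of_lt (by omega)
      simp [hAdef, h0]
  have hB : ∀ l, (C ω * X) * (C (((k-l).choose l : ℚ) * ω^l) * X^l * (1+X)^(k-2*l)) = B l := by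
    intro l
    have h2 : k+2-2*(l+1) = k - 2*l := by omega
    simp only [hBdef, h2, pow_succ, map_mul]
    ring
  rw [Finset.sum_congr rfl (fun l _ => hA l), Finset.sum_congr rfl (fun l _ => hB l)]
  rw [show k+2+1 = (k+2)+1 from rfl, Finset.sum_range_succ' _ (k+2)]
  have hf : ∀ l ∈ Finset.range (k+2),
      C (((k+2-(l+1)).choose (l+1) : ℚ) * ω^(l+1)) * X^(l+1) * (1+X)^(k+2-2*(l+1))
        = A (l+1) + B l := by
    intro l hl
    have e3 : k+1-(l+1) = k-l := by omega
    have hpascal : (k+2-(l+1)).choose (l+1) = (k-l).choose (l+1) + (k-l).choose l := by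
      rcases le_or_gt l k with h | h
      · have e1 : k+2-(l+1) = (k-l)+1 := by omega
        rw [e1, Nat.choose_succ_succ]
        simp only [Nat.succ_eq_add_one]
        omega
      · have hl' : l = k+1 := by simp at hl; omega
        subst hl'
        simp [Nat.choose_eq_zero_of_lt]
    rw [hpascal]
    simp only [hAdef, hBdef, e3, Nat.cast_add, add_mul, map_add]
  rw [Finset.sum_congr rfl hf, Finset.sum_add_distrib]
  have hsumA : ∑ m ∈ Finset.range (k+2), A m = A 0 + ∑ l ∈ Finset.range (k+1), A (l+1) := by
    rw [Finset.sum_range_succ' _ (k+1)]; ring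
  have hA0 : A 0 = C (((k+2-0).choose 0 : ℚ) * ω^0) * X^0 * (1+X)^(k+2-2*0) := by
    simp [hAdef]
  have hAtop : A (k+2) = 0 := by
    have : (k+1-(k+2)).choose (k+2) = 0 := by
      simp [Nat.choose_eq_zero_of_lt]
    simp [hAdef, this]
  have hBtop : B (k+1) = 0 := by
    have : (k-(k+1)).choose (k+1) = 0 := by
      simp [Nat.choose_eq_zero_of_lt]
    simp [hBdef, this]
  rw [show (k+1+1) = (k+1)+1 from rfl] at *
  rw [hsumA]
  rw [show ∑ l ∈ Finset.range (k+2), A (l+1)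
      = ∑ l ∈ Finset.range (k+1), A (l+1) + A (k+2) from Finset.sum_range_succ _ _,
    show ∑ l ∈ Finset.range (k+2), B l
      = ∑ l ∈ Finset.range (k+1), B l + B (k+1) from Finset.sum_range_succ _ _,
    hAtop, hBtop, hA0]
  ring

theorem delannoy_poly_gf (ω : ℚ) :
    (PowerSeries.mk fun k => delannoyPoly ω k) *
        (1 - PowerSeries.X -
          PowerSeries.C (Polynomial.X : Polynomial ℚ) *
            (PowerSeries.X + PowerSeries.C (Polynomial.C ω) * PowerSeries.X ^ 2)) =
      1 := by
  have expand : (PowerSeries.mk fun k => delannoyPoly ω k) *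
        (1 - PowerSeries.X -
          PowerSeries.C (Polynomial.X : Polynomial ℚ) *
            (PowerSeries.X + PowerSeries.C (Polynomial.C ω) * PowerSeries.X ^ 2))
      = (PowerSeries.mk fun k => delannoyPoly ω k)
        - (PowerSeries.mk fun k => delannoyPoly ω k) * PowerSeries.X
        - PowerSeries.C (Polynomial.X : Polynomial ℚ) *
            ((PowerSeries.mk fun k => delannoyPoly ω k) * PowerSeries.X)
        - PowerSeries.C (Polynomial.X : Polynomial ℚ) *
            (PowerSeries.C (Polynomial.C ω) *
              ((PowerSeries.mk fun k => delannoyPoly ω k) * PowerSeries.X ^ 2)) := by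
    ring
  rw [expand]
  refine PowerSeries.ext fun n => ?_
  simp only [map_sub, PowerSeries.coeff_C_mul]
  match n with
  | 0 =>
    simp [delannoyPoly, PowerSeries.coeff_mul_X_pow']
  | 1 =>
    rw [PowerSeries.coeff_succ_mul_X]
    have h2 : PowerSeries.coeff 1
        ((PowerSeries.mk fun k => delannoyPoly ω k) * PowerSeries.X ^ 2) = 0 := by
      rw [PowerSeries.coeff_mul_X_pow']
      simp
    rw [h2]
    simp [delannoyPoly, Finset.sum_range_succ]
  | (n+2) =>
    rw [PowerSeries.coeff_succ_mul_X, PowerSeries.coeff_mul_X_pow]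
    simp only [PowerSeries.coeff_mk, PowerSeries.coeff_one, Nat.succ_ne_zero, if_false]
    rw [delannoy_rec ω n]
    ring
end

section
/- For ω=1, the generating function of compressed Schröder paths bounded strictly below height k equals the ratio of Delannoy polynomials at negative argument: Σ_{n≥0} S_{n;1}^{(k)} t^n = d_{k−1}(−t)/d_k(−t). -/
open scoped BigOperators

/-- Count of Schröder paths from (0,0) to (n,j): steps (1,1), (1,-1) and (2,0),
staying weakly above the x-axis and strictly below the line y = k. -/
def schroederB (k : ℕ) : ℕ → ℤ → ℚ
  | 0, j => if j = 0 ∧ 0 < (k:ℤ) then 1 else 0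
  | 1, j => if j < 0 ∨ (k:ℤ) ≤ j then 0 else
      schroederB k 0 (j-1) + schroederB k 0 (j+1)
  | n+2, j => if j < 0 ∨ (k:ℤ) ≤ j then 0 else
      schroederB k (n+1) (j-1) + schroederB k (n+1) (j+1) + schroederB k n j

/-- The Delannoy polynomial (ω = 1) evaluated at −t, as a power series:
d_k(−t) = Σ_{l=0}^{k} C(k−l,l) (−1)^l t^l (1−t)^{k−2l}. -/
noncomputable def delannoyNeg (k : ℕ) : PowerSeries ℚ :=
  ∑ l ∈ Finset.range (k+1),
    PowerSeries.C (R := ℚ) (((k - l).choose l : ℚ) * (-1) ^ l) * PowerSeries.X ^ l *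
      (1 - PowerSeries.X) ^ (k - 2*l)

open PowerSeries

/-! ### Basic facts about `schroederB` -/

lemma schroederB_out (k : ℕ) : ∀ m : ℕ, ∀ j : ℤ, ((k:ℤ) ≤ j ∨ j < 0) → schroederB k m j = 0 := by
  intro m
  match m with
  | 0 => intro j hj; simp [schroederB]; omega
  | 1 => intro j hj; rw [schroederB]; rw [if_pos (by omega)]
  | n+2 => intro j hj; rw [schroederB]; rw [if_pos (by omega)]

lemma schroederB_high (k : ℕ) : ∀ m : ℕ, ∀ j : ℤ, (m:ℤ) < j → schroederB k m j = 0 := by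
  intro m
  induction m using Nat.strong_induction_on with
  | _ m ih =>
    match m with
    | 0 => intro j hj; simp [schroederB]; omega
    | 1 =>
      intro j hj
      rw [schroederB]
      split_ifs with h
      · rfl
      · rw [ih 0 (by omega) _ (by push_cast at hj ⊢; omega),
          ih 0 (by omega) _ (by push_cast at hj ⊢; omega)]
        ring
    | n+2 =>
      intro j hj
      rw [schroederB]
      split_ifs with h
      · rfl
      · rw [ih (n+1) (by omega) _ (by push_cast at hj ⊢; omega),
          ih (n+1) (by omega) _ (by push_cast at hj ⊢; omega),
          ih n (by omega) _ (by push_cast at hj ⊢; omega)]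
        ring

lemma schroederB_diag (k : ℕ) : ∀ j : ℕ, j < k → schroederB k j (j:ℤ) = 1 := by
  intro j
  induction j using Nat.strong_induction_on with
  | _ j ih =>
    match j with
    | 0 => intro hj; simp [schroederB]; omega
    | 1 =>
      intro hj
      rw [schroederB]
      split_ifs with h
      · exact absurd h (by push_cast; omega)
      · norm_num
        have h1 : schroederB k 0 0 = (1:ℚ) := by simp [schroederB]; omega
        have h2 : schroederB k 0 2 = (0:ℚ) := by simp [schroederB]
        rw [h1, h2]; ring
    | j+2 =>
      intro hj
      rw [schroederB]
      split_ifs with h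
      · exact absurd h (by push_cast; omega)
      · rw [show ((j+2:ℕ):ℤ) - 1 = ((j+1:ℕ):ℤ) from by push_cast; ring]
        rw [ih (j+1) (by omega) (by omega),
          schroederB_high k (j+1) (((j+2:ℕ):ℤ)+1) (by push_cast; omega),
          schroederB_high k j ((j+2:ℕ):ℤ) (by push_cast; omega)]
        ring

/-! ### The Delannoy power series and its three-term recurrence -/

noncomputable def dT (a l : ℕ) : PowerSeries ℚ :=
  PowerSeries.C (R := ℚ) (((a - l).choose l : ℚ) * (-1) ^ l) * PowerSeries.X ^ l *
    (1 - PowerSeries.X) ^ (a - 2*l)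

lemma delannoyNeg_eq (a : ℕ) : delannoyNeg a = ∑ l ∈ Finset.range (a+1), dT a l := rfl

lemma delannoy_zero : delannoyNeg 0 = 1 := by
  simp [delannoyNeg]

lemma delannoy_one : delannoyNeg 1 = 1 - X := by
  rw [delannoyNeg]
  rw [Finset.sum_range_succ, Finset.sum_range_one]
  norm_num

lemma dT_big (a l : ℕ) (h : a < l) : dT a l = 0 := by
  rw [dT, Nat.choose_eq_zero_of_lt (by omega)]
  simp

lemma dT_key (m i : ℕ) :
    dT (m+2) (i+1) = (1 - X) * dT (m+1) (i+1) + (-X) * dT m i := by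
  have hp : ((m+2)-(i+1)).choose (i+1) = (m-i).choose (i+1) + (m-i).choose i := by
    rcases le_or_gt i m with h | h
    · rw [show m+2-(i+1) = (m-i)+1 from by omega, Nat.choose_succ_succ, Nat.add_comm]
    · rw [show m+2-(i+1) = 0 from by omega, show m-i = 0 from by omega,
        Nat.choose_eq_zero_of_lt (show 0 < i+1 from by omega),
        Nat.choose_eq_zero_of_lt (show 0 < i from by omega)]
  have he : m+2-2*(i+1) = m - 2*i := by omega
  rw [dT, hp, he]
  rcases le_or_gt (2*i+1) m with h | h
  · have he2 : m - 2*i = (m+1-2*(i+1)) + 1 := by omega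
    have hc2 : m+1-(i+1) = m - i := by omega
    rw [dT, dT, hc2, he2, pow_succ]
    push_cast
    simp only [map_add, map_mul, map_neg, map_one, map_pow]
    ring
  · have hz : (m-i).choose (i+1) = 0 := Nat.choose_eq_zero_of_lt (by omega)
    have hz2 : (m+1-(i+1)).choose (i+1) = 0 := by
      rw [show m+1-(i+1) = m-i from by omega]; exact hz
    rw [dT, dT, hz, hz2]
    push_cast
    simp only [map_add, map_mul, map_zero, map_neg, map_one, map_pow]
    ring

lemma delannoy_rec_s19 (m : ℕ) :
    delannoyNeg (m+2) = (1 - X) * delannoyNeg (m+1) - X * delannoyNeg m := by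
  have hd : delannoyNeg (m+1) = ∑ i ∈ Finset.range (m+1), dT (m+1) (i+1) + (1-X)^(m+1) := by
    rw [delannoyNeg_eq, Finset.sum_range_succ']
    congr 1
    rw [dT]; simp
  have hS1 : ∑ i ∈ Finset.range (m+2), dT (m+1) (i+1)
      = delannoyNeg (m+1) - (1-X)^(m+1) := by
    rw [Finset.sum_range_succ, dT_big (m+1) (m+2) (by omega), hd]
    ring
  have hS2 : ∑ i ∈ Finset.range (m+2), dT m i = delannoyNeg m := by
    rw [Finset.sum_range_succ, dT_big m (m+1) (by omega), delannoyNeg_eq]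
    rw [add_zero]
  rw [delannoyNeg_eq, Finset.sum_range_succ']
  rw [Finset.sum_congr rfl (fun i _ => dT_key m i)]
  rw [Finset.sum_add_distrib, ← Finset.mul_sum, ← Finset.mul_sum, hS1, hS2]
  have : dT (m+2) 0 = (1-X)^(m+2) := by rw [dT]; simp
  rw [this, pow_succ]
  ring

/-! ### Generating functions of paths ending at height j -/

noncomputable def Gser (k j : ℕ) : PowerSeries ℚ :=
  PowerSeries.mk fun n => schroederB k (2*n + j) (j:ℤ)

lemma Gser_top (k : ℕ) : Gser k k = 0 := by
  ext n
  simp only [Gser, coeff_mk, map_zero]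
  exact schroederB_out k _ _ (Or.inl le_rfl)

lemma Gser_rec (k i : ℕ) (h : i+1 < k) :
    Gser k (i+1) = Gser k i + X * Gser k (i+2) + X * Gser k (i+1) := by
  ext n
  simp only [map_add]
  cases n with
  | zero =>
    simp only [Gser, coeff_mk, coeff_zero_X_mul, add_zero, Nat.mul_zero, Nat.zero_add]
    rw [schroederB_diag k (i+1) h, schroederB_diag k i (by omega)]
  | succ n =>
    simp only [Gser, coeff_succ_X_mul, coeff_mk]
    rw [show 2*(n+1) + (i+1) = (2*n+i+1)+2 from by omega, schroederB]
    rw [if_neg (show ¬(((i+1:ℕ):ℤ) < 0 ∨ (k:ℤ) ≤ ((i+1:ℕ):ℤ)) from by omega)]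
    rw [show (((i+1:ℕ):ℤ)) - 1 = ((i:ℕ):ℤ) from by push_cast; ring,
      show (((i+1:ℕ):ℤ)) + 1 = ((i+2:ℕ):ℤ) from by push_cast; ring]
    rw [show 2*(n+1)+i = 2*n+i+1+1 from by omega,
      show 2*n+(i+2) = 2*n+i+1+1 from by omega,
      show 2*n+(i+1) = 2*n+i+1 from by omega]

lemma Gser_bot (k : ℕ) (hk : 1 ≤ k) :
    Gser k 0 = 1 + X * Gser k 1 + X * Gser k 0 := by
  ext n
  simp only [map_add]
  cases n with
  | zero =>
    simp only [Gser, coeff_mk, coeff_zero_X_mul, add_zero, Nat.mul_zero, Nat.zero_add,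
      coeff_zero_one]
    have := schroederB_diag k 0 (by omega)
    simpa using this
  | succ n =>
    simp only [Gser, coeff_succ_X_mul, coeff_mk, coeff_one, Nat.succ_ne_zero, if_false]
    rw [show 2*(n+1) + 0 = (2*n)+2 from by omega, schroederB]
    rw [if_neg (show ¬(((0:ℕ):ℤ) < 0 ∨ (k:ℤ) ≤ ((0:ℕ):ℤ)) from by omega)]
    have h1 : schroederB k (2*n+1) (((0:ℕ):ℤ)-1) = 0 := schroederB_out k _ _ (by omega)
    rw [h1, show (((0:ℕ):ℤ))+1 = ((1:ℕ):ℤ) from by norm_num,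
      show (2*n+0 : ℕ) = 2*n from rfl]

/-! ### Solving the linear system -/

lemma Gser_sol (k : ℕ) : ∀ m, m < k → Gser k (k-1-m) = delannoyNeg m * Gser k (k-1) := by
  intro m
  induction m using Nat.strong_induction_on with
  | _ m ih =>
    match m with
    | 0 =>
      intro hm
      rw [delannoy_zero, one_mul, Nat.sub_zero]
    | 1 =>
      intro hm
      obtain ⟨c, rfl⟩ : ∃ c, k = c + 2 := ⟨k - 2, by omega⟩
      have hr := Gser_rec (c+2) c (by omega)
      rw [show c+2 = (c+2 : ℕ) from rfl, Gser_top (c+2)] at hr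
      rw [show c+2-1-1 = c from by omega, show c+2-1 = c+1 from by omega, delannoy_one]
      rw [mul_zero, add_zero] at hr
      linear_combination -hr
    | m+2 =>
      intro hm
      obtain ⟨c, hc⟩ : ∃ c, k = m + c + 3 := ⟨k - m - 3, by omega⟩
      subst hc
      have h1 := ih (m+1) (by omega) (by omega)
      have h0 := ih m (by omega) (by omega)
      rw [show m+c+3-1-(m+1) = c+1 from by omega] at h1
      rw [show m+c+3-1-m = c+2 from by omega] at h0
      have hr := Gser_rec (m+c+3) c (by omega)
      rw [show m+c+3-1-(m+2) = c from by omega, delannoy_rec_s19]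
      rw [h1, h0] at hr
      linear_combination -hr

theorem bounded_schroeder_gf (k : ℕ) (hk : 1 ≤ k) :
    (PowerSeries.mk fun n => schroederB k (2*n) 0) * delannoyNeg k =
      delannoyNeg (k-1) := by
  have hG0 : (PowerSeries.mk fun n => schroederB k (2*n) 0) = Gser k 0 := by
    ext n
    simp [Gser]
  rw [hG0]
  rcases eq_or_lt_of_le hk with h1 | h2
  · -- k = 1
    subst h1
    have hb := Gser_bot 1 le_rfl
    rw [Gser_top 1] at hb
    rw [show (1-1 : ℕ) = 0 from rfl, delannoy_zero, delannoy_one]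
    linear_combination hb
  · obtain ⟨c, rfl⟩ : ∃ c, k = c + 2 := ⟨k - 2, by omega⟩
    have h1 : Gser (c+2) 0 = delannoyNeg (c+1) * Gser (c+2) (c+1) := by
      have := Gser_sol (c+2) (c+1) (by omega)
      rwa [show c+2-1-(c+1) = 0 from by omega, show c+2-1 = c+1 from by omega] at this
    have h2' : Gser (c+2) 1 = delannoyNeg c * Gser (c+2) (c+1) := by
      have := Gser_sol (c+2) c (by omega)
      rwa [show c+2-1-c = 1 from by omega, show c+2-1 = c+1 from by omega] at this
    have hb := Gser_bot (c+2) (by omega)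
    have hT : delannoyNeg (c+2) * Gser (c+2) (c+1) = 1 := by
      rw [delannoy_rec_s19]
      linear_combination (X-1) * h1 + X * h2' + hb
    rw [show c+2-1 = c+1 from by omega, h1]
    calc delannoyNeg (c+1) * Gser (c+2) (c+1) * delannoyNeg (c+2)
        = delannoyNeg (c+1) * (delannoyNeg (c+2) * Gser (c+2) (c+1)) := by ring
      _ = delannoyNeg (c+1) := by rw [hT, mul_one]
end
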